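/- arXiv:1608.01836 — 4 statements merged into one kernel-verified Lean document; each statement's English description precedes it below -/
import Mathlib

section
/- Let u : ℝ^k → ℝ be locally Lipschitz and η : ℝ₊ → ℝ^k locally absolutely continuous. If s ≥ 0 is a point where both t ↦ u(η(t)) and t ↦ η(t) are differentiable, then there exists p in the Clarke generalized gradient ∂^C u(η(s)) such that the derivative of t ↦ u(η(t)) at s equals ⟨p, η'(s)⟩. -/
open scoped RealInnerProductSpace
open MeasureTheory Filter intervalIntegral Topology
set_option maxHeartbeats 1000000

lemma aeDiff {k : ℕ} (u : EuclideanSpace ℝ (Fin k) → ℝ) (hu : LocallyLipschitz u) :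
    ∀ᵐ x : EuclideanSpace ℝ (Fin k), DifferentiableAt ℝ u x := by
  rw [MeasureTheory.ae_iff]
  apply measure_null_of_locally_null
  intro x hx
  obtain ⟨K, t, ht, hlip⟩ := hu x
  obtain ⟨r, hr, hball⟩ := Metric.mem_nhds_iff.1 ht
  obtain ⟨g, hg, hgu⟩ := (hlip.mono hball).extend_real
  refine ⟨Metric.ball x r ∩ {a | ¬DifferentiableAt ℝ u a}, ?_, ?_⟩
  · exact Filter.inter_mem (mem_nhdsWithin_of_mem_nhds (Metric.ball_mem_nhds x hr)) self_mem_nhdsWithin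
  · refine measure_mono_null (fun y hy => ?_) (ae_iff.1 hg.ae_differentiableAt)
    obtain ⟨h2, h1⟩ := hy
    intro hdg
    have : u =ᶠ[nhds y] g := (Metric.isOpen_ball.eventually_mem h2).mono (fun z hz => hgu hz)
    exact h1 (hdg.congr_of_eventuallyEq this)

lemma aeLine {k : ℕ} (N : Set (EuclideanSpace ℝ (Fin k))) (hN : MeasurableSet N)
    (hN0 : volume N = 0) (v : EuclideanSpace ℝ (Fin k)) :
    ∀ᵐ y : EuclideanSpace ℝ (Fin k), ∀ᵐ t : ℝ, y + t • v ∉ N := by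
  set f : ℝ × EuclideanSpace ℝ (Fin k) → EuclideanSpace ℝ (Fin k) :=
    fun q => q.2 + q.1 • v with hf
  have hfc : Continuous f := by fun_prop
  set A : Set (ℝ × EuclideanSpace ℝ (Fin k)) := f ⁻¹' N with hA
  have hAm : MeasurableSet A := hfc.measurable hN
  have hA0 : (volume.prod volume) A = 0 := by
    rw [Measure.measure_prod_null hAm]
    refine Filter.Eventually.of_forall (fun t => ?_)
    show volume (Prod.mk t ⁻¹' A) = 0
    have h2 : (Prod.mk t ⁻¹' A) = (· + t • v) ⁻¹' N := rfl
    rw [h2, measure_preimage_add_right]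
    exact hN0
  set B : Set (EuclideanSpace ℝ (Fin k) × ℝ) := Prod.swap ⁻¹' A with hB
  have hBm : MeasurableSet B := measurable_swap hAm
  have hB0 : (volume.prod volume) B = 0 := by
    have := Measure.prod_swap (μ := volume (α := ℝ)) (ν := volume (α := EuclideanSpace ℝ (Fin k)))
    rw [← this, Measure.map_apply measurable_swap hBm]
    exact measure_mono_null (fun q hq => hq) hA0
  have := (Measure.measure_prod_null hBm).1 hB0
  filter_upwards [this] with y hy
  simp only [Pi.zero_apply] at hy
  rw [MeasureTheory.ae_iff]
  convert hy using 2
  ext t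
  simp only [Set.mem_setOf_eq, not_not, Set.mem_preimage]
  rfl

lemma slope_seq {f : ℝ → ℝ} {f' t : ℝ} (hf : HasDerivAt f f' t) :
    Tendsto (fun n : ℕ => (f (t + 1/(n+1)) - f t) * (n+1)) atTop (𝓝 f') := by
  have h1 : Tendsto (fun n : ℕ => t + 1/(n+1)) atTop (𝓝[≠] t) := by
    apply tendsto_nhdsWithin_of_tendsto_nhds_of_eventually_within
    · have : Tendsto (fun n : ℕ => (1:ℝ)/(n+1)) atTop (𝓝 0) := tendsto_one_div_add_atTop_nhds_zero_nat
      simpa using tendsto_const_nhds.add this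
    · refine Eventually.of_forall (fun n => ?_)
      have : (0:ℝ) < 1/(n+1) := by positivity
      simp only [Set.mem_compl_iff, Set.mem_singleton_iff]
      intro h
      nlinarith [h]
  have h2 := (hasDerivAt_iff_tendsto_slope.1 hf).comp h1
  refine h2.congr (fun n => ?_)
  have hpos : (0:ℝ) < 1/(n+1) := by positivity
  simp only [Function.comp_apply, slope_def_field, div_eq_iff (by positivity : ((1:ℝ)/(n+1)) ≠ 0)]
  rw [add_sub_cancel_left]
  field_simp

lemma ftc_lip {f : ℝ → ℝ} {L : NNReal} (hf : LipschitzWith L f) {a b : ℝ} (hab : a ≤ b) :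
    ∫ t in Set.Ioc a b, deriv f t = f b - f a := by
  have hfc : Continuous f := hf.continuous
  set g : ℕ → ℝ → ℝ := fun n t => (f (t + 1/(n+1)) - f t) * (n+1) with hg
  -- a.e. convergence to deriv
  have hae : ∀ᵐ t : ℝ, Tendsto (fun n => g n t) atTop (𝓝 (deriv f t)) := by
    filter_upwards [hf.ae_differentiableAt] with t ht
    exact slope_seq ht.hasDerivAt
  -- bound
  have hbd : ∀ n, ∀ᵐ t : ℝ ∂(volume.restrict (Set.Ioc a b)), ‖g n t‖ ≤ (L:ℝ) := by
    intro n
    refine Eventually.of_forall (fun t => ?_)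
    have h1 : |f (t + 1/(n+1)) - f t| ≤ (L:ℝ) * (1/(n+1)) := by
      have h2 := hf.dist_le_mul (t + 1/(n+1)) t
      rwa [Real.dist_eq, Real.dist_eq, add_sub_cancel_left,
        abs_of_pos (show (0:ℝ) < 1/(n+1) by positivity)] at h2
    have hpos : (0:ℝ) < (n:ℝ)+1 := by positivity
    rw [Real.norm_eq_abs, abs_mul, abs_of_pos hpos]
    calc |f (t + 1/(n+1)) - f t| * ((n:ℝ)+1) ≤ ((L:ℝ) * (1/(n+1))) * ((n:ℝ)+1) := by
          apply mul_le_mul_of_nonneg_right h1 (le_of_lt hpos)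
      _ = (L:ℝ) := by field_simp
  -- dominated convergence
  have hmeas : ∀ n, AEStronglyMeasurable (g n) (volume.restrict (Set.Ioc a b)) := by
    intro n
    exact ((hfc.comp (by continuity)).sub hfc).mul continuous_const |>.aestronglyMeasurable
  have hdc : Tendsto (fun n => ∫ t in Set.Ioc a b, g n t) atTop
      (𝓝 (∫ t in Set.Ioc a b, deriv f t)) := by
    refine tendsto_integral_of_dominated_convergence (fun _ => (L:ℝ)) hmeas
      (integrable_const _) hbd ?_
    exact ae_restrict_of_ae hae
  -- compute the integrals of g n
  have hint : ∀ c d : ℝ, IntervalIntegrable f volume c d := fun c d => hfc.intervalIntegrable c d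
  have key : ∀ n, ∫ t in Set.Ioc a b, g n t =
      ((∫ t in b..(b + 1/(n+1)), f t) - ∫ t in a..(a + 1/(n+1)), f t) * (n+1) := by
    intro n
    have h0 : (0:ℝ) < 1/(n+1) := by positivity
    have e1 : ∫ t in Set.Ioc a b, g n t = ∫ t in a..b, g n t := by
      rw [intervalIntegral.integral_of_le hab]
    rw [e1, hg]
    simp only
    rw [intervalIntegral.integral_mul_const, intervalIntegral.integral_sub
      ((show Continuous fun x : ℝ => f (x + 1/(n+1)) by continuity).intervalIntegrable a b)
      (hint a b)]
    have e2 : ∫ t in a..b, f (t + 1/(n+1)) = ∫ t in (a + 1/(n+1))..(b + 1/(n+1)), f t :=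
      (intervalIntegral.integral_comp_add_right (a := a) (b := b) f (1/(n+1)))
    rw [e2]
    have e3 : (∫ t in (a + 1/(n+1))..(b + 1/(n+1)), f t) - ∫ t in a..b, f t
        = (∫ t in b..(b + 1/(n+1)), f t) - ∫ t in a..(a + 1/(n+1)), f t := by
      rw [← intervalIntegral.integral_add_adjacent_intervals (hint a (a+1/(n+1))) (hint (a+1/(n+1)) b),
          ← intervalIntegral.integral_add_adjacent_intervals (hint (a+1/(n+1)) b) (hint b (b+1/(n+1)))]
      ring
    rw [e3]
  -- limit of the right-hand side
  have hF : ∀ c : ℝ, Tendsto (fun n : ℕ => (∫ t in c..(c + 1/(n+1)), f t) * (n+1)) atTop (𝓝 (f c)) := by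
    intro c
    have hder : HasDerivAt (fun x => ∫ t in c..x, f t) (f c) c :=
      intervalIntegral.integral_hasDerivAt_right (hint c c)
        (hfc.stronglyMeasurableAtFilter _ _) hfc.continuousAt
    have := slope_seq hder
    simpa using this
  have hlim2 : Tendsto (fun n => ∫ t in Set.Ioc a b, g n t) atTop (𝓝 (f b - f a)) := by
    simp only [key, sub_mul]
    exact (hF b).sub (hF a)
  exact tendsto_nhds_unique hdc hlim2

lemma lineMap_lip {k : ℕ} (y v : EuclideanSpace ℝ (Fin k)) :
    LipschitzWith ‖v‖₊ (fun t : ℝ => y + t • v) := by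
  apply LipschitzWith.of_dist_le_mul
  intro s t
  simp only [dist_eq_norm, add_sub_add_left_eq_sub, ← sub_smul, norm_smul, Real.norm_eq_abs]
  rw [mul_comm]
  rfl

lemma grad_inner_eq {k : ℕ} (g : EuclideanSpace ℝ (Fin k) → ℝ) (z v : EuclideanSpace ℝ (Fin k)) :
    ⟪gradient g z, v⟫ = fderiv ℝ g z v := by
  rw [gradient]
  exact InnerProductSpace.toDual_symm_apply

lemma deriv_along {k : ℕ} {g : EuclideanSpace ℝ (Fin k) → ℝ} {y v : EuclideanSpace ℝ (Fin k)}
    {t : ℝ} (hdt : DifferentiableAt ℝ g (y + t • v)) :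
    HasDerivAt (fun τ : ℝ => g (y + τ • v)) ⟪gradient g (y + t • v), v⟫ t := by
  have hc : HasDerivAt (fun τ : ℝ => y + τ • v) v t := by
    simpa using ((hasDerivAt_id t).smul_const v).const_add y
  have := (hdt.hasFDerivAt.comp_hasDerivAt t hc)
  rwa [grad_inner_eq]

lemma exists_grad_ge {k : ℕ} (u : EuclideanSpace ℝ (Fin k) → ℝ) (hu : LocallyLipschitz u)
    (x v : EuclideanSpace ℝ (Fin k)) (d : ℝ)
    (hlim : Tendsto (fun h : ℝ => (u (x + h • v) - u x)/h) (𝓝[>] (0:ℝ)) (𝓝 d)) :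
    ∃ p ∈ {p : EuclideanSpace ℝ (Fin k) | ∃ xs : ℕ → EuclideanSpace ℝ (Fin k),
      (∀ n, DifferentiableAt ℝ u (xs n)) ∧
      Tendsto xs atTop (𝓝 x) ∧
      Tendsto (fun n => gradient u (xs n)) atTop (𝓝 p)}, d ≤ ⟪p, v⟫ := by
  classical
  obtain ⟨K, t0, ht0, hlip⟩ := hu x
  obtain ⟨r, hr, hball⟩ := Metric.nhds_basis_closedBall.mem_iff.1 ht0
  obtain ⟨g, hg, hgu⟩ := (hlip.mono hball).extend_real
  have heq : ∀ z ∈ Metric.ball x r, u =ᶠ[𝓝 z] g := fun z hz =>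
    (Metric.isOpen_ball.eventually_mem hz).mono
      (fun w hw => hgu (Metric.ball_subset_closedBall hw))
  -- the key construction
  have main : ∀ ε > (0:ℝ), ∃ z, DifferentiableAt ℝ u z ∧ dist z x < ε ∧
      ‖gradient u z‖ ≤ (K:ℝ) ∧ d - ε ≤ ⟪gradient u z, v⟫ := by
    intro ε hε
    -- choose h
    have hev : ∀ᶠ h in 𝓝[>] (0:ℝ), dist ((u (x + h • v) - u x)/h) d < ε/4 :=
      hlim (Metric.ball_mem_nhds d (by positivity))
    obtain ⟨h0, hh0, hh0p⟩ := (Metric.mem_nhdsWithin_iff).1 hev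
    set h : ℝ := min (h0/2) (min (r/(4*(‖v‖+1))) (ε/(2*(‖v‖+1)))) with hh_def
    have hvpos : (0:ℝ) < ‖v‖ + 1 := by positivity
    have hhpos : 0 < h := by
      apply lt_min (by positivity) (lt_min (by positivity) (by positivity))
    have hhv : h * ‖v‖ < r/4 := by
      calc h * ‖v‖ ≤ (r/(4*(‖v‖+1))) * ‖v‖ := by
            apply mul_le_mul_of_nonneg_right _ (norm_nonneg v)
            exact le_trans (min_le_right _ _) (min_le_left _ _)
        _ < r/4 := by
            rw [div_mul_eq_mul_div, div_lt_div_iff₀ (by positivity) (by positivity)]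
            nlinarith [norm_nonneg v]
    have hhv2 : h * ‖v‖ ≤ ε/2 := by
      calc h * ‖v‖ ≤ (ε/(2*(‖v‖+1))) * ‖v‖ := by
            apply mul_le_mul_of_nonneg_right _ (norm_nonneg v)
            exact le_trans (min_le_right _ _) (min_le_right _ _)
        _ ≤ ε/2 := by
            rw [div_mul_eq_mul_div, div_le_div_iff₀ (by positivity) (by positivity)]
            nlinarith [norm_nonneg v]
    have hquot : dist ((u (x + h • v) - u x)/h) d < ε/4 := by
      apply hh0p
      constructor
      · rw [Metric.mem_ball, Real.dist_eq, sub_zero, abs_of_pos hhpos]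
        exact lt_of_le_of_lt (min_le_left _ _) (by linarith)
      · exact hhpos
    -- choose δ
    set δ : ℝ := min (min ((ε/4)*h/((K:ℝ)+1)) (r/4)) (ε/4) with hδ_def
    have hδpos : 0 < δ := by
      apply lt_min (lt_min (by positivity) (by positivity)) (by positivity)
    -- choose y
    set N : Set (EuclideanSpace ℝ (Fin k)) := {z | ¬ DifferentiableAt ℝ g z} with hN_def
    have hNm : MeasurableSet N := (measurableSet_of_differentiableAt ℝ g).compl
    have hN0 : volume N = 0 := ae_iff.1 hg.ae_differentiableAt
    have hae := aeLine N hNm hN0 v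
    have hyex : ∃ y ∈ Metric.ball x δ, ∀ᵐ t : ℝ, y + t • v ∉ N := by
      by_contra hcon
      push_neg at hcon
      have hsub : Metric.ball x δ ⊆ {y : EuclideanSpace ℝ (Fin k) |
          ¬ ∀ᵐ t : ℝ, y + t • v ∉ N} := fun y hy => hcon y hy
      have : volume (Metric.ball x δ) = 0 :=
        measure_mono_null hsub (ae_iff.1 hae)
      exact (Metric.measure_ball_pos volume x hδpos).ne' this
    obtain ⟨y, hy, hyae⟩ := hyex
    -- the function along the line
    set φ : ℝ → ℝ := fun t => g (y + t • v) with hφ_def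
    have hφlip : LipschitzWith (K * ‖v‖₊) φ := hg.comp (lineMap_lip y v)
    have hftc : ∫ t in Set.Ioc 0 h, deriv φ t = φ h - φ 0 := ftc_lip hφlip hhpos.le
    -- lower bound for φ h - φ 0
    have hx_cb : x ∈ Metric.closedBall x r := Metric.mem_closedBall_self hr.le
    have hxh_cb : x + h • v ∈ Metric.closedBall x r := by
      rw [Metric.mem_closedBall, dist_eq_norm, add_sub_cancel_left, norm_smul,
        Real.norm_eq_abs, abs_of_pos hhpos]
      linarith
    have hdistyx : dist y x < δ := hy
    have h1 : |φ 0 - u x| ≤ (K:ℝ) * δ := by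
      have : φ 0 = g y := by simp [hφ_def]
      rw [this, hgu hx_cb]
      calc |g y - g x| = dist (g y) (g x) := (Real.dist_eq _ _).symm
        _ ≤ (K:ℝ) * dist y x := hg.dist_le_mul y x
        _ ≤ (K:ℝ) * δ := by nlinarith [K.coe_nonneg, dist_nonneg (x := y) (y := x)]
    have h2 : |φ h - u (x + h • v)| ≤ (K:ℝ) * δ := by
      have : φ h = g (y + h • v) := rfl
      rw [this, hgu hxh_cb]
      have h4 : dist (y + h • v) (x + h • v) = dist y x := by
        simp [dist_eq_norm]
      calc |g (y + h • v) - g (x + h • v)| = dist (g (y + h • v)) (g (x + h • v)) :=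
            (Real.dist_eq _ _).symm
        _ ≤ (K:ℝ) * dist (y + h • v) (x + h • v) := hg.dist_le_mul _ _
        _ = (K:ℝ) * dist y x := by rw [h4]
        _ ≤ (K:ℝ) * δ := by nlinarith [K.coe_nonneg, dist_nonneg (x := y) (y := x)]
    have hδh : (K:ℝ) * δ ≤ (ε/4) * h := by
      have : δ ≤ (ε/4)*h/((K:ℝ)+1) := le_trans (min_le_left _ _) (min_le_left _ _)
      have hK : (0:ℝ) ≤ K := K.coe_nonneg
      calc (K:ℝ) * δ ≤ (K:ℝ) * ((ε/4)*h/((K:ℝ)+1)) := by nlinarith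
        _ ≤ (ε/4) * h := by
            rw [mul_div_assoc']
            rw [div_le_iff₀ (by positivity)]
            nlinarith [hε, hhpos]
    have hu_incr : (d - ε/4) * h ≤ u (x + h • v) - u x := by
      rw [Real.dist_eq] at hquot
      have h5 := (abs_lt.1 hquot).1
      have h6 : d - ε/4 < (u (x + h • v) - u x)/h := by linarith
      rw [lt_div_iff₀ hhpos] at h6
      exact h6.le
    have hφlb : (d - 3*ε/4) * h ≤ φ h - φ 0 := by
      have e1 := (abs_le.1 h1).2
      have e2 := (abs_le.1 h2).1
      nlinarith [hδh, hu_incr]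
    have hex : ∃ t ∈ Set.Ioc (0:ℝ) h, DifferentiableAt ℝ g (y + t • v) ∧
        d - ε ≤ ⟪gradient g (y + t • v), v⟫ := by
      by_contra hcon
      push_neg at hcon
      have hbd : ∀ᵐ t ∂(volume.restrict (Set.Ioc (0:ℝ) h)), deriv φ t ≤ d - ε := by
        filter_upwards [ae_restrict_of_ae hyae, ae_restrict_mem measurableSet_Ioc] with t ht hmem
        have hdt : DifferentiableAt ℝ g (y + t • v) := by
          simpa [hN_def] using ht
        rw [(deriv_along hdt).deriv]
        exact (hcon t hmem hdt).le
      have hcint : IntegrableOn (fun _ : ℝ => d - ε) (Set.Ioc (0:ℝ) h) :=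
        (integrableOn_const_iff).2 (Or.inr measure_Ioc_lt_top)
      have hint : IntegrableOn (deriv φ) (Set.Ioc (0:ℝ) h) := by
        apply Integrable.mono' ((integrableOn_const_iff (C := (K:ℝ)*‖v‖)).2
          (Or.inr measure_Ioc_lt_top)) ((measurable_deriv φ).aestronglyMeasurable)
        refine ae_of_all _ (fun t => ?_)
        by_cases hdt : DifferentiableAt ℝ φ t
        · have hb := norm_fderiv_le_of_lipschitz ℝ (f := φ) (x₀ := t) hφlip
          rw [Real.norm_eq_abs, ← fderiv_apply_one_eq_deriv]
          calc |fderiv ℝ φ t 1| ≤ ‖fderiv ℝ φ t‖ * ‖(1:ℝ)‖ := (fderiv ℝ φ t).le_opNorm 1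
            _ ≤ (K:ℝ)*‖v‖ := by
                rw [norm_one, mul_one]
                refine le_trans hb ?_
                push_cast
                rfl
        · rw [deriv_zero_of_not_differentiableAt hdt]
          simp only [Real.norm_eq_abs, abs_zero]
          positivity
      have hile : ∫ t in Set.Ioc (0:ℝ) h, deriv φ t
          ≤ ∫ _ in Set.Ioc (0:ℝ) h, (d - ε) :=
        setIntegral_mono_ae_restrict hint hcint hbd
      rw [hftc, setIntegral_const, Real.volume_real_Ioc_of_le hhpos.le, sub_zero,
        smul_eq_mul] at hile
      nlinarith
    obtain ⟨t, htmem, hdt, hget⟩ := hex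
    set z := y + t • v with hz_def
    have hdzy : dist z y ≤ h * ‖v‖ := by
      rw [hz_def, dist_eq_norm, add_sub_cancel_left, norm_smul, Real.norm_eq_abs,
        abs_of_pos htmem.1]
      exact mul_le_mul_of_nonneg_right htmem.2 (norm_nonneg v)
    have hdzx : dist z x ≤ h * ‖v‖ + δ :=
      le_trans (dist_triangle z y x) (by linarith [hdistyx.le])
    have hzball : z ∈ Metric.ball x r := by
      rw [Metric.mem_ball]
      have hδr : δ ≤ r/4 := le_trans (min_le_left _ _) (min_le_right _ _)
      calc dist z x ≤ h * ‖v‖ + δ := hdzx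
        _ < r/4 + r/4 := by linarith
        _ ≤ r := by linarith
    have hzd : dist z x < ε := by
      have hδε : δ ≤ ε/4 := min_le_right _ _
      calc dist z x ≤ h * ‖v‖ + δ := hdzx
        _ ≤ ε/2 + ε/4 := by linarith
        _ < ε := by linarith
    have heqz := heq z hzball
    have hgr : gradient u z = gradient g z := by
      unfold gradient
      rw [heqz.fderiv_eq]
    refine ⟨z, ?_, hzd, ?_, ?_⟩
    · rw [heqz.differentiableAt_iff]
      exact hdt
    · rw [hgr]
      unfold gradient
      rw [LinearIsometryEquiv.norm_map]
      exact norm_fderiv_le_of_lipschitz ℝ hg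
    · rw [hgr]
      exact hget
  -- build the sequence and extract a convergent subsequence of gradients
  have hmainseq : ∀ n : ℕ, ∃ z, DifferentiableAt ℝ u z ∧ dist z x < 1/(n+1) ∧
      ‖gradient u z‖ ≤ (K:ℝ) ∧ d - 1/(n+1) ≤ ⟪gradient u z, v⟫ :=
    fun n => main (1/(n+1)) (by positivity)
  choose z hz1 hz2 hz3 hz4 using hmainseq
  have hzx : Tendsto z atTop (𝓝 x) := by
    rw [tendsto_iff_dist_tendsto_zero]
    apply squeeze_zero (fun n => dist_nonneg) (fun n => (hz2 n).le)
    exact tendsto_one_div_add_atTop_nhds_zero_nat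
  have hbdd : ∀ n, gradient u (z n) ∈ Metric.closedBall (0 : EuclideanSpace ℝ (Fin k)) K := by
    intro n
    rw [Metric.mem_closedBall, dist_zero_right]
    exact hz3 n
  obtain ⟨p, _, ψ, hψ, hψt⟩ := tendsto_subseq_of_bounded Metric.isBounded_closedBall hbdd
  refine ⟨p, ⟨z ∘ ψ, fun n => hz1 _, hzx.comp hψ.tendsto_atTop, hψt⟩, ?_⟩
  have hinner : Tendsto (fun n => ⟪gradient u (z (ψ n)), v⟫) atTop (𝓝 ⟪p, v⟫) :=
    hψt.inner tendsto_const_nhds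
  have hdl : Tendsto (fun n : ℕ => d - 1/(n+1)) atTop (𝓝 d) := by
    have h0 : Tendsto (fun _ : ℕ => d) atTop (𝓝 d) := tendsto_const_nhds
    simpa using h0.sub tendsto_one_div_add_atTop_nhds_zero_nat
  refine le_of_tendsto_of_tendsto' hdl hinner (fun n => ?_)
  have hle : (1:ℝ)/(ψ n + 1) ≤ 1/(n + 1) := by
    apply one_div_le_one_div_of_le (by positivity)
    have h1 := hψ.le_apply (x := n)
    have h2 : (n:ℝ) ≤ (ψ n : ℝ) := by exact_mod_cast h1
    linarith
  calc d - 1/(n+1) ≤ d - 1/(ψ n + 1) := by linarith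
    _ ≤ ⟪gradient u (z (ψ n)), v⟫ := hz4 (ψ n)

/-- The Clarke generalized gradient of `u` at `x`: the convex hull of all limits of
gradients `∇u (xₙ)` along sequences `xₙ → x` of differentiability points of `u`. -/
def clarkeGradient {k : ℕ} (u : EuclideanSpace ℝ (Fin k) → ℝ)
    (x : EuclideanSpace ℝ (Fin k)) : Set (EuclideanSpace ℝ (Fin k)) :=
  convexHull ℝ {p | ∃ xs : ℕ → EuclideanSpace ℝ (Fin k),
    (∀ n, DifferentiableAt ℝ u (xs n)) ∧
    Filter.Tendsto xs Filter.atTop (nhds x) ∧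
    Filter.Tendsto (fun n => gradient u (xs n)) Filter.atTop (nhds p)}

/-- `η` is locally absolutely continuous on `S`: on every compact subinterval of `S`,
for every `ε > 0` there is `δ > 0` such that any finite family of pairwise disjoint
subintervals of total length `< δ` has total variation of `η` less than `ε`. -/
def LocallyAbsContOn {F : Type*} [NormedAddCommGroup F] (η : ℝ → F) (S : Set ℝ) : Prop :=
  ∀ a b : ℝ, a ∈ S → b ∈ S → ∀ ε > 0, ∃ δ > 0, ∀ n : ℕ, ∀ c d : Fin n → ℝ,
    (∀ j, c j ∈ Set.Icc a b ∧ d j ∈ Set.Icc a b ∧ c j ≤ d j) →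
    (Pairwise fun j l => Disjoint (Set.Ioo (c j) (d j)) (Set.Ioo (c l) (d l))) →
    (∑ j, (d j - c j)) < δ → (∑ j, ‖η (d j) - η (c j)‖) < ε

/-- if `u` is locally Lipschitz, `η` is a locally absolutely continuous curve on
`ℝ₊`, and both `t ↦ u (η t)` and `η` are differentiable at `s ≥ 0`, then the derivative of
`u ∘ η` at `s` equals `⟪p, η'(s)⟫` for some `p` in the Clarke generalized gradient of `u`
at `η s`. -/
theorem stmt0 {k : ℕ} (u : EuclideanSpace ℝ (Fin k) → ℝ)
    (η : ℝ → EuclideanSpace ℝ (Fin k))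
    (hu : LocallyLipschitz u)
    (hη : LocallyAbsContOn η (Set.Ici (0 : ℝ)))
    (s : ℝ) (hs : 0 ≤ s)
    (η' : EuclideanSpace ℝ (Fin k)) (hη' : HasDerivAt η η' s)
    (d : ℝ) (hd : HasDerivAt (fun t => u (η t)) d s) :
    ∃ p ∈ clarkeGradient u (η s), d = ⟪p, η'⟫ := by
  classical
  set x := η s with hx_def
  set v := η' with hv_def
  -- Step 1: two-sided limit of difference quotients along the straight line
  have hlim2 : Tendsto (fun h : ℝ => (u (x + h • v) - u x)/h) (𝓝[≠] (0:ℝ)) (𝓝 d) := by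
    obtain ⟨K, t0, ht0, hlip⟩ := hu x
    obtain ⟨r, hr, hball⟩ := Metric.nhds_basis_closedBall.mem_iff.1 ht0
    -- the curve quotient tends to d
    have hadd : Tendsto (fun h : ℝ => s + h) (𝓝 (0:ℝ)) (𝓝 s) := by
      have h1 : Tendsto (fun h : ℝ => s + h) (𝓝 (0:ℝ)) (𝓝 (s + 0)) :=
        tendsto_const_nhds.add tendsto_id
      simpa using h1
    have hshift : Tendsto (fun h : ℝ => s + h) (𝓝[≠] (0:ℝ)) (𝓝[≠] s) := by
      refine tendsto_nhdsWithin_of_tendsto_nhds_of_eventually_within _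
        (hadd.mono_left nhdsWithin_le_nhds) ?_
      refine eventually_nhdsWithin_of_forall (fun h hh => ?_)
      simp only [Set.mem_compl_iff, Set.mem_singleton_iff] at hh ⊢
      intro hcon
      exact hh (by linarith)
    have hA : Tendsto (fun h : ℝ => (u (η (s + h)) - u x)/h) (𝓝[≠] (0:ℝ)) (𝓝 d) := by
      have := (hasDerivAt_iff_tendsto_slope.1 hd).comp hshift
      refine this.congr (fun h => ?_)
      simp only [Function.comp_apply, slope_def_field]
      rw [add_sub_cancel_left]
    -- the correction term tends to 0
    have hB : Tendsto (fun h : ℝ => (u (x + h • v) - u (η (s + h)))/h)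
        (𝓝[≠] (0:ℝ)) (𝓝 0) := by
      have hlittle : Tendsto (fun h : ℝ => ‖h‖⁻¹ * ‖η (s + h) - x - h • v‖)
          (𝓝 (0:ℝ)) (𝓝 0) := by
        have := (hasDerivAt_iff_tendsto.1 hη').comp hadd
        refine this.congr (fun h => ?_)
        simp only [Function.comp_apply, add_sub_cancel_left]
        rfl
      have hcont : Tendsto (fun h : ℝ => η (s+h)) (𝓝 (0:ℝ)) (𝓝 x) := by
        exact hη'.continuousAt.tendsto.comp hadd
      have hmem : ∀ᶠ h : ℝ in 𝓝 0, η (s+h) ∈ Metric.closedBall x r ∧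
          x + h • v ∈ Metric.closedBall x r := by
        have h1 : ∀ᶠ h : ℝ in 𝓝 0, η (s+h) ∈ Metric.closedBall x r :=
          hcont (Metric.closedBall_mem_nhds x hr)
        have h2 : ∀ᶠ h : ℝ in 𝓝 0, x + h • v ∈ Metric.closedBall x r := by
          have : Tendsto (fun h : ℝ => x + h • v) (𝓝 0) (𝓝 x) := by
            have : Tendsto (fun h : ℝ => h • v) (𝓝 (0:ℝ)) (𝓝 ((0:ℝ) • v)) :=
              (tendsto_id (α := ℝ)).smul_const v
            simpa using tendsto_const_nhds.add this
          exact this (Metric.closedBall_mem_nhds x hr)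
        exact h1.and h2
      apply squeeze_zero_norm' (a := fun h : ℝ => (K:ℝ) * (‖h‖⁻¹ * ‖η (s + h) - x - h • v‖))
      · filter_upwards [hmem.filter_mono nhdsWithin_le_nhds,
          self_mem_nhdsWithin] with h hmem2 hne
        have hne0 : h ≠ 0 := hne
        have hlips := hlip.mono hball
        have hd1 := hlips.dist_le_mul (x + h • v) hmem2.2 (η (s+h)) hmem2.1
        simp only [Real.dist_eq] at hd1
        rw [Real.norm_eq_abs, abs_div]
        rw [div_le_iff₀ (by positivity : (0:ℝ) < |h|)]
        calc |u (x + h • v) - u (η (s + h))| ≤ (K:ℝ) * dist (x + h • v) (η (s+h)) := hd1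
          _ = (K:ℝ) * ‖η (s + h) - x - h • v‖ := by
              rw [dist_eq_norm, ← norm_neg]
              congr 1
              abel
          _ ≤ (K:ℝ) * (‖h‖⁻¹ * ‖η (s + h) - x - h • v‖) * |h| := by
              rw [Real.norm_eq_abs]
              rw [mul_assoc, mul_comm (|h|⁻¹ * _) (|h|)]
              rw [← mul_assoc (|h|) _, mul_inv_cancel₀ (by positivity : (|h| : ℝ) ≠ 0), one_mul]
      · have h5 : Tendsto (fun h : ℝ => (K:ℝ) * (‖h‖⁻¹ * ‖η (s + h) - x - h • v‖))
            (𝓝[≠] (0:ℝ)) (𝓝 ((K:ℝ) * 0)) :=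
          (hlittle.const_mul (K:ℝ)).mono_left nhdsWithin_le_nhds
        simpa using h5
    have := hA.add hB
    rw [add_zero] at this
    refine this.congr (fun h => ?_)
    rw [← add_div]
    ring_nf
  have hlim_pos : Tendsto (fun h : ℝ => (u (x + h • v) - u x)/h) (𝓝[>] (0:ℝ)) (𝓝 d) :=
    hlim2.mono_left (nhdsWithin_mono 0 (fun h hh => ne_of_gt hh))
  have hneg_map : Tendsto (fun h : ℝ => -h) (𝓝[>] (0:ℝ)) (𝓝[≠] (0:ℝ)) := by
    apply tendsto_nhdsWithin_of_tendsto_nhds_of_eventually_within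
    · simpa using (tendsto_neg_nhdsGT_neg (a := (0:ℝ))).mono_right nhdsWithin_le_nhds
    · refine eventually_nhdsWithin_of_forall (fun h hh => ?_)
      simp only [Set.mem_compl_iff, Set.mem_singleton_iff]
      intro hcon
      simp only [Set.mem_Ioi] at hh
      linarith [neg_eq_zero.1 hcon]
  have hlim_neg : Tendsto (fun h : ℝ => (u (x + h • (-v)) - u x)/h) (𝓝[>] (0:ℝ)) (𝓝 (-d)) := by
    have := (hlim2.comp hneg_map).neg
    refine this.congr (fun h => ?_)
    simp only [Function.comp_apply]
    rw [neg_smul, ← smul_neg, div_neg, neg_neg]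
  obtain ⟨p, hpS, hpv⟩ := exists_grad_ge u hu x v d hlim_pos
  obtain ⟨q, hqS, hqv'⟩ := exists_grad_ge u hu x (-v) (-d) hlim_neg
  have hqv : ⟪q, v⟫ ≤ d := by
    rw [inner_neg_right] at hqv'
    linarith
  have hC : Convex ℝ (clarkeGradient u x) := convex_convexHull ℝ _
  have hpC : p ∈ clarkeGradient u x := subset_convexHull ℝ _ hpS
  have hqC : q ∈ clarkeGradient u x := subset_convexHull ℝ _ hqS
  set a := ⟪p, v⟫ with ha_def
  set b := ⟪q, v⟫ with hb_def
  by_cases hab : a = b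
  · refine ⟨p, hpC, le_antisymm hpv ?_⟩
    show a ≤ d
    rw [hab]
    exact hqv
  · have hba : b < a := lt_of_le_of_ne (le_trans hqv hpv) (Ne.symm hab)
    set lam := (d - b)/(a - b) with hlam_def
    have h0 : 0 ≤ lam := div_nonneg (by linarith) (by linarith)
    have h1 : 0 ≤ 1 - lam := by
      have hle : lam ≤ 1 := by
        rw [hlam_def, div_le_one (by linarith)]
        linarith
      linarith
    refine ⟨lam • p + (1 - lam) • q, hC hpC hqC h0 h1 (by ring), ?_⟩
    rw [inner_add_left, real_inner_smul_left, real_inner_smul_left, ← ha_def, ← hb_def]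
    have hm : lam * (a - b) = d - b := div_mul_cancel₀ _ (by linarith : a - b ≠ 0)
    nlinarith [hm]
end

section
/- If f is a real-valued function on an interval that admits a right derivative at almost every point, then f is differentiable at almost every point. -/
open MeasureTheory Set Filter Metric

lemma near_of_density {S : Set ℝ} {x : ℝ}
    (hx : Tendsto (fun r => volume (S ∩ closedBall x r) / volume (closedBall x r))
      (nhdsWithin (0:ℝ) (Ioi 0)) (nhds 1)) {ε : ℝ} (hε0 : 0 < ε) (hε1 : ε ≤ 1) :
    ∃ δ > 0, ∀ y : ℝ, |y - x| < δ → y ≠ x → ∃ z ∈ S, z ∈ Icc (y - ε * |y - x|) y := by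
  have hc : (ENNReal.ofReal (1 - ε/8)) < 1 := by
    rw [← ENNReal.ofReal_one]
    exact ENNReal.ofReal_lt_ofReal_iff_of_nonneg (by linarith) |>.2 (by linarith)
  have hev : ∀ᶠ r in nhdsWithin (0:ℝ) (Ioi 0),
      ENNReal.ofReal (1 - ε/8) < volume (S ∩ closedBall x r) / volume (closedBall x r) :=
    hx.eventually (eventually_gt_nhds hc)
  obtain ⟨u, hu, huS⟩ := mem_nhdsGT_iff_exists_Ioo_subset.1 hev
  refine ⟨u/2, by simpa using (mem_Ioi.1 hu), ?_⟩
  intro y hyd hyx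
  by_contra hcon
  push_neg at hcon
  set t := |y - x| with ht
  have ht0 : 0 < t := abs_pos.2 (sub_ne_zero.2 hyx)
  have hr : (2*t) ∈ Ioo (0:ℝ) u := ⟨by linarith, by linarith⟩
  have hineq := huS hr
  have hsub : S ∩ closedBall x (2*t) ⊆ closedBall x (2*t) \ Icc (y - ε*t) y := by
    rintro z ⟨hzS, hzB⟩
    exact ⟨hzB, fun hzI => (hcon z hzS) hzI⟩
  have hIccB : Icc (y - ε*t) y ⊆ closedBall x (2*t) := by
    intro z hz
    rw [mem_closedBall, Real.dist_eq]
    have habs : |y - x| ≤ t := le_of_eq ht.symm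
    have h3 := abs_le.1 habs
    rw [abs_le]
    constructor
    · nlinarith [hz.1, hz.2, h3.1, h3.2]
    · nlinarith [hz.1, hz.2, h3.1, h3.2]
  have hμB : volume (closedBall x (2*t)) = ENNReal.ofReal (4*t) := by
    rw [Real.volume_closedBall]; ring_nf
  have hB0 : volume (closedBall x (2*t)) ≠ 0 := by
    rw [hμB]; simp [ENNReal.ofReal_eq_zero]; linarith
  have hBtop : volume (closedBall x (2*t)) ≠ ⊤ := by rw [hμB]; exact ENNReal.ofReal_ne_top
  have hlt : ENNReal.ofReal (1 - ε/8) * volume (closedBall x (2*t))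
      < volume (S ∩ closedBall x (2*t)) :=
    (ENNReal.lt_div_iff_mul_lt (Or.inl hB0) (Or.inl hBtop)).1 hineq
  have hle : volume (S ∩ closedBall x (2*t)) ≤ ENNReal.ofReal (4*t) - ENNReal.ofReal (ε*t) := by
    calc volume (S ∩ closedBall x (2*t)) ≤ volume (closedBall x (2*t) \ Icc (y - ε*t) y) :=
          measure_mono hsub
      _ = volume (closedBall x (2*t)) - volume (Icc (y - ε*t) y) :=
          measure_diff hIccB measurableSet_Icc.nullMeasurableSet (by simp [Real.volume_Icc])
      _ = ENNReal.ofReal (4*t) - ENNReal.ofReal (ε*t) := by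
          rw [hμB, Real.volume_Icc]; ring_nf
  rw [hμB, ← ENNReal.ofReal_mul (by linarith)] at hlt
  rw [← ENNReal.ofReal_sub _ (by positivity)] at hle
  have := lt_of_lt_of_le hlt hle
  have h2 : (4*t - ε*t : ℝ) ≤ (1 - ε/8) * (4*t) := by nlinarith
  exact absurd this (not_lt.2 (ENNReal.ofReal_le_ofReal h2))

lemma arith_aux {C t a : ℝ} (hC : 0 < C) (ht : 0 < t)
    (ha : a ≤ C/3 * t + C/6 * (2*t)) : a ≤ C * t := by nlinarith

lemma pointwise_diff {f g : ℝ → ℝ} {S : Set ℝ} {k : ℝ} (hk : 0 < k) {c x : ℝ}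
    (hxS : x ∈ S)
    (hSA : ∀ z ∈ S, ∀ y, z < y → y ≤ z + 1/k → |f y - f z| ≤ k * (y - z))
    (hfg : Set.EqOn f g S)
    (hg : HasDerivAt g c x)
    (hnear : ∀ ε : ℝ, 0 < ε → ε ≤ 1 →
      ∃ δ > 0, ∀ y : ℝ, |y - x| < δ → y ≠ x → ∃ z ∈ S, z ∈ Icc (y - ε * |y - x|) y) :
    HasDerivAt f c x := by
  rw [hasDerivAt_iff_isLittleO, Asymptotics.isLittleO_iff]
  intro C hC
  set ε : ℝ := min (C / (3 * (k + |c| + 1))) 1 with hε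
  have hεpos : 0 < ε := by
    apply lt_min _ one_pos
    positivity
  have hε1 : ε ≤ 1 := min_le_right _ _
  obtain ⟨δ₁, hδ₁, hδ₁p⟩ := hnear ε hεpos hε1
  -- from hg : eventually |g w - g x - c (w - x)| ≤ (C/6) |w - x|
  have hgev : ∀ᶠ w in nhds x, ‖g w - g x - (w - x) * c‖ ≤ (C/6) * ‖w - x‖ := by
    have := (hasDerivAt_iff_isLittleO.1 hg).def (by positivity : (0:ℝ) < C/6)
    simpa [smul_eq_mul] using this
  obtain ⟨δ₂, hδ₂, hδ₂p⟩ := Metric.eventually_nhds_iff.1 hgev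
  have hmain : ∀ y : ℝ, |y - x| < min δ₁ (min (δ₂/2) (1/k)) →
      ‖f y - f x - (y - x) * c‖ ≤ C * ‖y - x‖ := by
    intro y hy
    rcases eq_or_ne y x with rfl | hyx
    · simp
    set t := |y - x| with htdef
    have ht0 : 0 < t := abs_pos.2 (sub_ne_zero.2 hyx)
    obtain ⟨z, hzS, hz1, hz2⟩ := hδ₁p y (lt_of_lt_of_le hy (min_le_left _ _)) hyx
    have htk : t ≤ 1/k := le_of_lt (lt_of_lt_of_le hy ((min_le_right _ _).trans (min_le_right _ _)))
    have htδ₂ : t < δ₂/2 := lt_of_lt_of_le hy ((min_le_right _ _).trans (min_le_left _ _))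
    -- |f y - f z| ≤ k ε t
    have hfyz : |f y - f z| ≤ k * (ε * t) := by
      rcases eq_or_lt_of_le hz2 with rfl | hzy
      · simp; positivity
      · have h1 : y ≤ z + 1/k := by
          have : y - z ≤ ε * t := by linarith
          have : y - z ≤ t := le_trans this (by nlinarith)
          linarith
        have := hSA z hzS y hzy h1
        have hyz : y - z ≤ ε * t := by linarith
        calc |f y - f z| ≤ k * (y - z) := this
          _ ≤ k * (ε * t) := by nlinarith
    have hzx : |z - x| ≤ 2 * t := by
      have h1 : |z - y| ≤ ε * t := by
        rw [abs_le]; constructor <;> [linarith; linarith]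
      have : ε * t ≤ t := by nlinarith
      calc |z - x| ≤ |z - y| + |y - x| := abs_sub_le z y x
        _ ≤ ε * t + t := by gcongr
        _ ≤ 2 * t := by linarith
    have hgz : ‖g z - g x - (z - x) * c‖ ≤ (C/6) * ‖z - x‖ := by
      apply hδ₂p
      rw [Real.dist_eq]
      calc |z - x| ≤ 2 * t := hzx
        _ < δ₂ := by linarith
    have hfz : f z = g z := hfg hzS
    have hfx : f x = g x := hfg hxS
    have key : |f y - f x - (y - x) * c| ≤
        |f y - f z| + |g z - g x - (z - x) * c| + |c| * |z - y| := by
      have : f y - f x - (y - x) * c =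
          (f y - f z) + (g z - g x - (z - x) * c) + ((z - y) * c) := by
        rw [hfz, hfx]; ring
      rw [this]
      calc |(f y - f z) + (g z - g x - (z - x) * c) + ((z - y) * c)|
          ≤ |(f y - f z) + (g z - g x - (z - x) * c)| + |(z - y) * c| := abs_add_le _ _
        _ ≤ |f y - f z| + |g z - g x - (z - x) * c| + |(z - y) * c| := by
            gcongr; exact abs_add_le _ _
        _ = |f y - f z| + |g z - g x - (z - x) * c| + |c| * |z - y| := by
            rw [abs_mul]; ring
    have hzy_abs : |z - y| ≤ ε * t := by
      rw [abs_le]; constructor <;> [linarith; linarith]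
    have hεbound : ε ≤ C / (3 * (k + |c| + 1)) := min_le_left _ _
    have hkc : 0 < k + |c| + 1 := by positivity
    have final : |f y - f x - (y - x) * c| ≤ C * t := by
      have h1 : |f y - f z| ≤ k * (ε * t) := hfyz
      have h2 : |g z - g x - (z - x) * c| ≤ (C/6) * (2 * t) := by
        calc |g z - g x - (z - x) * c| ≤ (C/6) * |z - x| := hgz
          _ ≤ (C/6) * (2*t) := by gcongr
      have h3 : |c| * |z - y| ≤ |c| * (ε * t) := by
        apply mul_le_mul_of_nonneg_left hzy_abs (abs_nonneg c)
      have hsum := key.trans (by linarith : |f y - f z| + |g z - g x - (z - x) * c| + |c| * |z - y| ≤ k * (ε * t) + (C/6) * (2*t) + |c| * (ε * t))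
      have hεt : (k + |c|) * ε ≤ C / 3 := by
        have : (k + |c| + 1) * ε ≤ C / 3 := by
          have := mul_le_mul_of_nonneg_left hεbound (le_of_lt hkc)
          calc (k + |c| + 1) * ε ≤ (k + |c| + 1) * (C / (3 * (k + |c| + 1))) := this
            _ = C / 3 := by field_simp
        nlinarith [abs_nonneg c, hεpos]
      have heq : k * (ε * t) + |c| * (ε * t) = ((k + |c|) * ε) * t := by ring
      have h4 : ((k + |c|) * ε) * t ≤ (C/3) * t := mul_le_mul_of_nonneg_right hεt ht0.le
      exact arith_aux hC ht0 (by linarith)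
    simpa [Real.norm_eq_abs] using final
  filter_upwards [Metric.eventually_nhds_iff.2 ⟨min δ₁ (min (δ₂/2) (1/k)),
    by positivity, fun {y} hy => hmain y (by simpa [Real.dist_eq] using hy)⟩] with y hy
  simpa [smul_eq_mul, Real.norm_eq_abs] using hy

/-- if a real-valued function `f` on an interval `I` admits a right derivative
at almost every point of `I`, then it is differentiable at almost every point of `I`.
(Corollary of the Denjoy–Young–Saks theorem.) -/
theorem stmt2 (f : ℝ → ℝ) (I : Set ℝ) (hI : I.OrdConnected)
    (h : ∀ᵐ s ∂(MeasureTheory.volume.restrict I),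
      ∃ d : ℝ, HasDerivWithinAt f d (Set.Ioi s) s) :
    ∀ᵐ s ∂(MeasureTheory.volume.restrict I), DifferentiableAt ℝ f s := by
  classical
  set E : Set ℝ := {s | ∃ d : ℝ, HasDerivWithinAt f d (Set.Ioi s) s} with hE
  set D : Set ℝ := {x | DifferentiableAt ℝ f x} with hD
  set A : ℕ → Set ℝ := fun n =>
    {x | ∀ y, x < y → y ≤ x + 1/((n:ℝ)+1) → |f y - f x| ≤ ((n:ℝ)+1) * (y - x)} with hA
  set S : ℕ → ℤ → Set ℝ := fun n j =>
    A n ∩ Icc ((j:ℝ)/((n:ℝ)+1)) (((j:ℝ)+1)/((n:ℝ)+1)) with hS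
  -- Claim 2: each S n j \ D is null
  have claim2 : ∀ n j, volume (S n j \ D) = 0 := by
    intro n j
    set K : ℝ := (n:ℝ)+1 with hK
    have hK0 : 0 < K := by positivity
    -- f is Lipschitz on S n j
    have key : ∀ a ∈ S n j, ∀ b ∈ S n j, a < b → |f b - f a| ≤ K * (b - a) := by
      rintro a ⟨haA, ha1, ha2⟩ b ⟨hbA, hb1, hb2⟩ hab
      apply haA b hab
      have : ((j:ℝ)+1)/K - (j:ℝ)/K = 1/K := by field_simp; ring
      linarith
    have hlip : LipschitzOnWith (Real.toNNReal K) f (S n j) := by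
      rw [lipschitzOnWith_iff_dist_le_mul]
      intro a ha b hb
      rw [Real.dist_eq, Real.dist_eq, Real.coe_toNNReal _ hK0.le]
      rcases lt_trichotomy a b with hab | rfl | hab
      · rw [abs_of_nonpos (by linarith [abs_nonneg (f b - f a)] : a - b ≤ 0)]
        have := key a ha b hb hab
        calc |f a - f b| = |f b - f a| := abs_sub_comm _ _
          _ ≤ K * (b - a) := this
          _ = K * -(a - b) := by ring
      · simp
      · rw [abs_of_nonneg (by linarith : (0:ℝ) ≤ a - b)]
        exact key b hb a ha hab
    obtain ⟨g, hglip, hfg⟩ := hlip.extend_real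
    have hrad : ∀ᵐ x ∂(volume : Measure ℝ), DifferentiableAt ℝ g x :=
      hglip.ae_differentiableAt_real
    have hdens := Besicovitch.ae_tendsto_measure_inter_div volume (S n j)
    have hae := hdens.and (ae_restrict_of_ae hrad)
    have hpt : ∀ᵐ x ∂(volume.restrict (S n j)),
        (x ∈ S n j → DifferentiableAt ℝ f x) := by
      filter_upwards [hae] with x hx hxS
      obtain ⟨hden, hgd⟩ := hx
      have hSA : ∀ z ∈ S n j, ∀ y, z < y → y ≤ z + 1/K → |f y - f z| ≤ K * (y - z) :=
        fun z hz y h1 h2 => hz.1 y h1 h2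
      have hnear : ∀ ε : ℝ, 0 < ε → ε ≤ 1 →
          ∃ δ > 0, ∀ y : ℝ, |y - x| < δ → y ≠ x → ∃ z ∈ S n j, z ∈ Icc (y - ε * |y - x|) y :=
        fun ε hε0 hε1 => near_of_density hden hε0 hε1
      exact (pointwise_diff hK0 hxS hSA hfg hgd.hasDerivAt hnear).differentiableAt
    rw [ae_iff] at hpt
    refine le_antisymm ?_ zero_le
    calc volume (S n j \ D) ≤ volume ({x | ¬(x ∈ S n j → DifferentiableAt ℝ f x)} ∩ S n j) := by
          apply measure_mono
          rintro x ⟨hx1, hx2⟩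
          exact ⟨fun hcon => hx2 (hcon hx1), hx1⟩
      _ ≤ (volume.restrict (S n j)) {x | ¬(x ∈ S n j → DifferentiableAt ℝ f x)} :=
          Measure.le_restrict_apply _ _
      _ = 0 := hpt
  -- Claim 1: E ⊆ ⋃ n j, S n j
  have claim1 : E ⊆ ⋃ (n : ℕ), ⋃ (j : ℤ), S n j := by
    rintro s ⟨d, hd⟩
    have h1 := (hasDerivWithinAt_iff_isLittleO.1 hd).def one_pos
    obtain ⟨u, hu, hsub⟩ := mem_nhdsGT_iff_exists_Ioo_subset.1 h1
    have hus : 0 < u - s := by simpa using (mem_Ioi.1 hu)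
    obtain ⟨n, hn⟩ := exists_nat_gt (max (|d| + 1) (1/(u - s)))
    have hn1 : |d| + 1 ≤ (n:ℝ) + 1 := by
      have := (max_le_iff.1 hn.le).1; linarith
    have hn2 : 1/((n:ℝ)+1) < u - s := by
      have h2 : 1/(u-s) < (n:ℝ)+1 := by
        have := (max_le_iff.1 hn.le).2; linarith
      rw [div_lt_iff₀ (by positivity)] at h2 ⊢
      nlinarith [h2, hus]
    have hsA : s ∈ A n := by
      intro y hy1 hy2
      have hyu : y < u := by linarith
      have := hsub ⟨hy1, hyu⟩
      simp only [mem_setOf_eq, smul_eq_mul, Real.norm_eq_abs, one_mul] at this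
      have h3 : |f y - f s - (y - s) * d| ≤ |y - s| := this
      have h4 : |y - s| = y - s := abs_of_pos (by linarith)
      have h5 : |f y - f s| ≤ |f y - f s - (y - s) * d| + |(y - s) * d| := by
        calc |f y - f s| = |(f y - f s - (y - s) * d) + (y - s) * d| := by ring_nf
          _ ≤ _ := abs_add_le _ _
      have h6 : |(y - s) * d| = (y - s) * |d| := by
        rw [abs_mul, h4]
      nlinarith [abs_nonneg d]
    refine mem_iUnion.2 ⟨n, mem_iUnion.2 ⟨⌊s * ((n:ℝ)+1)⌋, hsA, ?_, ?_⟩⟩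
    · rw [div_le_iff₀ (by positivity)]
      exact Int.floor_le _
    · rw [le_div_iff₀ (by positivity)]
      linarith [Int.lt_floor_add_one (s * ((n:ℝ)+1))]
  -- combine
  have hnull : volume (E \ D) = 0 := by
    apply measure_mono_null (t := ⋃ (n : ℕ), ⋃ (j : ℤ), (S n j \ D))
    · rintro x ⟨hxE, hxD⟩
      obtain ⟨n, hn⟩ := mem_iUnion.1 (claim1 hxE)
      obtain ⟨j, hj⟩ := mem_iUnion.1 hn
      exact mem_iUnion.2 ⟨n, mem_iUnion.2 ⟨j, hj, hxD⟩⟩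
    · exact measure_iUnion_null fun n => measure_iUnion_null fun j => claim2 n j
  have hv : ∀ᵐ x ∂(volume : Measure ℝ), x ∉ E \ D := by
    rw [ae_iff]
    have heq : {a : ℝ | ¬ a ∉ E \ D} = E \ D := by ext a; exact not_not
    rw [heq]; exact hnull
  filter_upwards [h, ae_restrict_of_ae hv] with s hs1 hs2
  by_contra hDc
  exact hs2 ⟨hs1, hDc⟩
end

section
/- Under the hypotheses of the previous conditional expectation formula (g F_s-measurable, bounded on Ω_i), the map t ↦ E_i[g_{ω(t)}(ω)] is differentiable on (s,∞), right-differentiable at s, and its derivative equals −E_i[(exp(−B(t−s)) B g(ω))_{ω(s)}] for every t ≥ s (right derivative at t = s). -/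
open MeasureTheory

lemma entry_norm_le {m : ℕ} (M : Matrix (Fin m) (Fin m) ℝ) (k j : Fin m) :
    @norm ℝ _ (M k j) ≤ @norm _ Matrix.linftyOpSemiNormedRing.toNorm M := by
  letI : SeminormedRing (Matrix (Fin m) (Fin m) ℝ) := Matrix.linftyOpSemiNormedRing
  rw [Matrix.linfty_opNorm_def]
  calc ‖M k j‖ ≤ ∑ j', ‖M k j'‖ :=
        Finset.single_le_sum (f := fun j' => ‖M k j'‖) (fun _ _ => norm_nonneg _)
          (Finset.mem_univ j)
    _ ≤ _ := by
        have := Finset.le_sup (f := fun i => ∑ j', ‖M i j'‖₊) (Finset.mem_univ k)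
        have := (NNReal.coe_le_coe).2 this
        simpa [NNReal.coe_sum] using this

lemma hasDerivAt_exp_entry {m : ℕ} (B : Matrix (Fin m) (Fin m) ℝ) (s t : ℝ) (k j : Fin m) :
    HasDerivAt (fun r : ℝ => NormedSpace.exp (-((r - s) • B)) k j)
      (-((NormedSpace.exp (-((t - s) • B)) * B) k j)) t := by
  letI : SeminormedRing (Matrix (Fin m) (Fin m) ℝ) := Matrix.linftyOpSemiNormedRing
  letI : NormedRing (Matrix (Fin m) (Fin m) ℝ) := Matrix.linftyOpNormedRing
  letI : NormedAlgebra ℝ (Matrix (Fin m) (Fin m) ℝ) := Matrix.linftyOpNormedAlgebra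
  have h1 : HasDerivAt (fun u : ℝ => NormedSpace.exp (u • B))
      (NormedSpace.exp ((s - t) • B) * B) (s - t) := hasDerivAt_exp_smul_const B (s - t)
  have h2 : HasDerivAt (fun r : ℝ => s - r) (-1) t := (hasDerivAt_id t).const_sub s
  have h3 : HasDerivAt (fun r : ℝ => NormedSpace.exp ((s - r) • B))
      ((-1 : ℝ) • (NormedSpace.exp ((s - t) • B) * B)) t := h1.scomp t h2
  let L : Matrix (Fin m) (Fin m) ℝ →L[ℝ] ℝ :=
    LinearMap.mkContinuous (Matrix.entryLinearMap ℝ ℝ k j) 1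
      (fun M => by simpa using entry_norm_le M k j)
  have h4 := (L.hasFDerivAt.comp_hasDerivAt t h3)
  have heq : ∀ r : ℝ, -((r - s) • B) = (s - r) • B := by
    intro r; rw [← neg_smul, neg_sub]
  simp only [heq]
  refine (h4 : HasDerivAt (fun r => NormedSpace.exp ((s - r) • B) k j) _ t).congr_deriv ?_
  simp [L, Matrix.smul_apply]

-- Key distribution lemma: for F_s-measurable integrable-ish g and t ≥ s,
-- ∫_{X t = j} g·j = ∑_k M k j * ∫_{X s = k} g·j.
lemma key_lemma {m : ℕ} {Ω : Type*} [m0 : MeasurableSpace Ω]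
    (μ : Measure Ω) [IsProbabilityMeasure μ]
    (Fs : MeasurableSpace Ω) (hFle : Fs ≤ m0)
    (St : Set Ω)
    (Ss : Fin m → Set Ω)
    (M : Matrix (Fin m) (Fin m) ℝ) (j : Fin m)
    (hrestr : ∀ E : Set Ω, MeasurableSet[Fs] E →
      (μ (E ∩ St)).toReal = ∑ k, (μ (E ∩ Ss k)).toReal * M k j)
    (f : Ω → ℝ) (hf : StronglyMeasurable[Fs] f) (hfint : Integrable f μ) :
    ∫ ω in St, f ω ∂μ = ∑ k, M k j * ∫ ω in Ss k, f ω ∂μ := by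
  set νt : @Measure Ω Fs := (μ.restrict St).trim hFle with hνt
  set νs : Fin m → @Measure Ω Fs := fun k => (μ.restrict (Ss k)).trim hFle with hνs
  have hmeq : νt + ∑ k, (ENNReal.ofReal (max (-(M k j)) 0)) • νs k
      = ∑ k, (ENNReal.ofReal (max (M k j) 0)) • νs k := by
    ext E hE
    have hE0 : MeasurableSet[m0] E := hFle E hE
    simp only [Measure.add_apply, Measure.coe_finset_sum, Finset.sum_apply,
      Measure.smul_apply, smul_eq_mul, hνt, hνs,
      trim_measurableSet_eq hFle hE, Measure.restrict_apply hE0]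
    have hfin1 : μ (E ∩ St) ≠ ⊤ := measure_ne_top _ _
    have hfin2 : ∀ (c : Fin m → ℝ), (∑ k, ENNReal.ofReal (c k) * μ (E ∩ Ss k)) ≠ ⊤ := by
      intro c
      refine (ENNReal.sum_lt_top.2 fun k _ => ?_).ne
      exact ENNReal.mul_lt_top ENNReal.ofReal_lt_top (measure_lt_top _ _)
    rw [← ENNReal.toReal_eq_toReal_iff' (ENNReal.add_ne_top.2 ⟨hfin1, hfin2 _⟩) (hfin2 _)]
    have hfin3 : ∀ (c : Fin m → ℝ), (∀ k, 0 ≤ c k) →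
        (∑ k, ENNReal.ofReal (c k) * μ (E ∩ Ss k)).toReal
          = ∑ k, c k * (μ (E ∩ Ss k)).toReal := by
      intro c hc
      have hne : ∀ k ∈ (Finset.univ : Finset (Fin m)),
          ENNReal.ofReal (c k) * μ (E ∩ Ss k) ≠ ⊤ :=
        fun k _ => ENNReal.mul_ne_top ENNReal.ofReal_ne_top (measure_ne_top _ _)
      rw [ENNReal.toReal_sum hne]
      exact Finset.sum_congr rfl fun k _ => by
        rw [ENNReal.toReal_mul, ENNReal.toReal_ofReal (hc k)]
    rw [ENNReal.toReal_add hfin1 (hfin2 _),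
      hfin3 _ (fun k => le_max_right _ _), hfin3 _ (fun k => le_max_right _ _)]
    rw [hrestr E hE, ← Finset.sum_add_distrib]
    refine Finset.sum_congr rfl fun k _ => ?_
    have h := max_zero_sub_max_neg_zero_eq_self (M k j)
    linear_combination (-(μ (E ∩ Ss k)).toReal) * h
  have hintt : Integrable f νt := (hfint.restrict).trim hFle hf
  have hints : ∀ k, Integrable f (νs k) := fun k => (hfint.restrict).trim hFle hf
  have hI := congrArg (fun ρ : @Measure Ω Fs => ∫ ω, f ω ∂ρ) hmeq
  rw [integral_add_measure hintt (integrable_finset_sum_measure.2 fun k _ =>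
        (hints k).smul_measure ENNReal.ofReal_ne_top),
      integral_finset_sum_measure (fun k _ => (hints k).smul_measure ENNReal.ofReal_ne_top),
      integral_finset_sum_measure (fun k _ => (hints k).smul_measure ENNReal.ofReal_ne_top)]
      at hI
  simp only [integral_smul_measure, ENNReal.toReal_ofReal (le_max_right _ _),
    smul_eq_mul] at hI
  have htrim : ∫ ω, f ω ∂νt = ∫ ω in St, f ω ∂μ := (integral_trim hFle hf).symm
  have htrims : ∀ k, ∫ ω, f ω ∂(νs k) = ∫ ω in Ss k, f ω ∂μ :=
    fun k => (integral_trim hFle hf).symm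
  rw [htrim] at hI
  simp only [htrims] at hI
  have : ∫ ω in St, f ω ∂μ
      = ∑ k, max (M k j) 0 * ∫ ω in Ss k, f ω ∂μ
        - ∑ k, max (-(M k j)) 0 * ∫ ω in Ss k, f ω ∂μ := by linarith
  rw [this, ← Finset.sum_sub_distrib]
  refine Finset.sum_congr rfl fun k _ => ?_
  have h := max_zero_sub_max_neg_zero_eq_self (M k j)
  linear_combination (∫ ω in Ss k, f ω ∂μ) * h

/-- under the hypotheses of the conditional expectation formula (the Markov chain
`X` with generator `−B` started at `i`, `g : Ω → ℝ^m` being `F s`-measurable and bounded on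
`Ω_i`), the map `t ↦ E_i[g_{ω(t)}(ω)]` is differentiable on `(s,∞)`, right-differentiable
at `s`, and its derivative at `t ≥ s` equals `−E_i[(exp(−B(t−s)) B g(ω))_{ω(s)}]`. -/
theorem stmt7 {m : ℕ} {Ω : Type*} [m0 : MeasurableSpace Ω]
    (B : Matrix (Fin m) (Fin m) ℝ)
    (hoff : ∀ i j, i ≠ j → B i j ≤ 0)
    (hrow : ∀ i, ∑ j, B i j = 0)
    (F : ℝ → MeasurableSpace Ω) (hFle : ∀ t, F t ≤ m0)
    (hFmono : ∀ s t : ℝ, s ≤ t → F s ≤ F t)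
    (P : Fin m → Measure Ω) (hP : ∀ i, IsProbabilityMeasure (P i))
    (X : ℝ → Ω → Fin m) (hX : ∀ t, Measurable (X t))
    (hadapted : ∀ t : ℝ, @Measurable Ω (Fin m) (F t) _ (X t))
    (s : ℝ) (hs : 0 ≤ s) (i : Fin m)
    (hsupp : P i {ω | X 0 ω ≠ i} = 0)
    (hrestr : ∀ E : Set Ω, MeasurableSet[F s] E → ∀ t : ℝ, s ≤ t → ∀ j : Fin m,
      (P i (E ∩ {ω | X t ω = j})).toReal
        = ∑ k, (P i (E ∩ {ω | X s ω = k})).toReal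
            * NormedSpace.exp (-((t - s) • B)) k j)
    (g : Ω → Fin m → ℝ)
    (hg : @Measurable Ω (Fin m → ℝ) (F s) _ g)
    (hbdd : ∃ K : ℝ, ∀ ω, X 0 ω = i → ∀ j, |g ω j| ≤ K) :
    (∀ t : ℝ, s < t →
      HasDerivAt (fun r => ∫ ω, g ω (X r ω) ∂(P i))
        (-∫ ω, (NormedSpace.exp (-((t - s) • B)) * B).mulVec (g ω) (X s ω) ∂(P i)) t) ∧
    HasDerivWithinAt (fun r => ∫ ω, g ω (X r ω) ∂(P i))
      (-∫ ω, (NormedSpace.exp (-((s - s) • B)) * B).mulVec (g ω) (X s ω) ∂(P i))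
      (Set.Ici s) s := by
  obtain ⟨K, hK⟩ := hbdd
  haveI := hP i
  have hgm : Measurable g := hg.mono (hFle s) le_rfl
  have hgj : ∀ j, Measurable fun ω => g ω j := fun j => (measurable_pi_apply j).comp hgm
  have hae : ∀ᵐ ω ∂(P i), X 0 ω = i := by
    rw [MeasureTheory.ae_iff]
    exact hsupp
  have hint : ∀ j, Integrable (fun ω => g ω j) (P i) := fun j =>
    Integrable.mono' (integrable_const K) (hgj j).aestronglyMeasurable
      (hae.mono fun ω h => by simpa [Real.norm_eq_abs] using hK ω h j)
  have hXt : ∀ (r : ℝ) (j : Fin m), MeasurableSet {ω | X r ω = j} :=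
    fun r j => (hX r) (measurableSet_singleton j)
  -- decomposition of integrals along the partition given by X r
  have hdecomp : ∀ (r : ℝ) (h : Ω → Fin m → ℝ), (∀ k, Integrable (fun ω => h ω k) (P i)) →
      ∫ ω, h ω (X r ω) ∂(P i) = ∑ k, ∫ ω in {ω | X r ω = k}, h ω k ∂(P i) := by
    intro r h hI
    have heq : (fun ω => h ω (X r ω))
        = fun ω => ∑ k, Set.indicator {ω' | X r ω' = k} (fun ω' => h ω' k) ω := by
      funext ω
      rw [Finset.sum_eq_single (X r ω)]
      · rw [Set.indicator_of_mem (by exact rfl)]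
      · intro b _ hb
        exact Set.indicator_of_notMem (fun hmem => hb (by exact hmem.symm)) _
      · simp
    rw [heq, integral_finset_sum _ fun k _ => (hI k).indicator (hXt r k)]
    exact Finset.sum_congr rfl fun k _ => integral_indicator (hXt r k)
  set c : Fin m → Fin m → ℝ := fun k j => ∫ ω in {ω | X s ω = k}, g ω j ∂(P i) with hc
  -- the explicit formula for the integral for t ≥ s
  have hformula : ∀ t, s ≤ t →
      ∫ ω, g ω (X t ω) ∂(P i)
        = ∑ j, ∑ k, NormedSpace.exp (-((t - s) • B)) k j * c k j := by
    intro t ht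
    rw [hdecomp t g hint]
    refine Finset.sum_congr rfl fun j _ => ?_
    exact key_lemma (P i) (F s) (hFle s) _ _
      (NormedSpace.exp (-((t - s) • B))) j
      (fun E hE => hrestr E hE t ht j) _
      ((measurable_pi_apply j).comp hg).stronglyMeasurable (hint j)
  -- derivative of the explicit formula
  have hφ : ∀ t : ℝ, HasDerivAt
      (fun r : ℝ => ∑ j, ∑ k, NormedSpace.exp (-((r - s) • B)) k j * c k j)
      (∑ j, ∑ k, -((NormedSpace.exp (-((t - s) • B)) * B) k j) * c k j) t :=
    fun t => HasDerivAt.fun_sum fun j _ => HasDerivAt.fun_sum fun k _ =>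
      (hasDerivAt_exp_entry B s t k j).mul_const (c k j)
  -- identification of the derivative with the stated integral
  have hval : ∀ t : ℝ,
      (∑ j, ∑ k, -((NormedSpace.exp (-((t - s) • B)) * B) k j) * c k j)
        = -∫ ω, (NormedSpace.exp (-((t - s) • B)) * B).mulVec (g ω) (X s ω) ∂(P i) := by
    intro t
    set N := NormedSpace.exp (-((t - s) • B)) * B with hN
    have hmv : ∀ (ω : Ω) (k : Fin m), N.mulVec (g ω) k = ∑ j, N k j * g ω j := by
      intro ω k
      simp [Matrix.mulVec, dotProduct]
    have hcomp : ∀ k, Integrable (fun ω => N.mulVec (g ω) k) (P i) := by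
      intro k
      have : (fun ω => N.mulVec (g ω) k) = fun ω => ∑ j, N k j * g ω j := by
        funext ω; exact hmv ω k
      rw [this]
      exact integrable_finset_sum _ fun j _ => (hint j).const_mul _
    rw [hdecomp s (fun ω => N.mulVec (g ω)) hcomp]
    have hset : ∀ k, ∫ ω in {ω | X s ω = k}, N.mulVec (g ω) k ∂(P i)
        = ∑ j, N k j * c k j := by
      intro k
      have h1 : ∫ ω in {ω | X s ω = k}, N.mulVec (g ω) k ∂(P i)
          = ∫ ω in {ω | X s ω = k}, (∑ j, N k j * g ω j) ∂(P i) := by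
        refine integral_congr_ae (Filter.Eventually.of_forall fun ω => hmv ω k)
      rw [h1, integral_finset_sum _ fun j _ => ((hint j).const_mul _).restrict]
      exact Finset.sum_congr rfl fun j _ => integral_const_mul _ _
    simp only [hset]
    rw [Finset.sum_comm]
    simp [neg_mul, ← Finset.sum_neg_distrib]
  constructor
  · intro t ht
    have hder := hφ t
    rw [hval t] at hder
    refine hder.congr_of_eventuallyEq ?_
    filter_upwards [isOpen_Ioi.mem_nhds ht] with r hr
    exact hformula r (le_of_lt hr)
  · have hder := (hφ s).hasDerivWithinAt (s := Set.Ici s)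
    rw [hval s] at hder
    exact hder.congr (fun r hr => hformula r hr) (hformula s le_rfl)
end

section
/- Let u : ℝ₊ × ℝ^N → ℝ^m be locally Lipschitz and γ an admissible random curve. Then for every i ∈ {1,…,m}, the function t ↦ E_i[u_{ω(t)}(t, γ(t,ω))] is locally absolutely continuous on ℝ₊. -/
open MeasureTheory

/-- Uniform (in `ω`) local (in `t`) absolute continuity of a random curve on `ℝ₊`. -/
def UnifLocAbsCont {Ω F : Type*} [NormedAddCommGroup F] (γ : ℝ → Ω → F) : Prop :=
  ∀ T > (0 : ℝ), ∀ ε > (0 : ℝ), ∃ δ > (0 : ℝ), ∀ ω : Ω, ∀ n : ℕ, ∀ c d : Fin n → ℝ,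
    (∀ j, 0 ≤ c j ∧ c j ≤ d j ∧ d j ≤ T) →
    (Pairwise fun j l => Disjoint (Set.Ioo (c j) (d j)) (Set.Ioo (c l) (d l))) →
    (∑ j, (d j - c j)) < δ → (∑ j, ‖γ (d j) ω - γ (c j) ω‖) < ε

/-- `γ` is nonanticipating for the index process `X`: paths agreeing up to time `t`
produce curves agreeing up to time `t`. -/
def NonAnticipating {Ω : Type*} {m : ℕ} {F : Type*} (X : ℝ → Ω → Fin m)
    (γ : ℝ → Ω → F) : Prop :=
  ∀ t : ℝ, 0 ≤ t → ∀ ω₁ ω₂ : Ω,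
    (∀ r : ℝ, 0 ≤ r → r ≤ t → X r ω₁ = X r ω₂) →
    ∀ r : ℝ, 0 ≤ r → r ≤ t → γ r ω₁ = γ r ω₂

section Helpers

open Metric Nat

/-- Norm bound for `exp x - 1` in a real Banach algebra. -/
lemma aux_norm_exp_sub_one_le {𝔸 : Type*} [NormedRing 𝔸] [NormedAlgebra ℝ 𝔸] [CompleteSpace 𝔸]
    (x : 𝔸) : ‖NormedSpace.exp x - 1‖ ≤ ‖x‖ * Real.exp ‖x‖ := by
  have hs : HasSum (fun n : ℕ => ((n ! : ℝ))⁻¹ • x ^ n) (NormedSpace.exp x) :=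
    NormedSpace.exp_series_hasSum_exp' x
  have h1 : HasSum (fun n : ℕ => (((n+1) ! : ℝ))⁻¹ • x ^ (n+1)) (NormedSpace.exp x - 1) := by
    have := (hasSum_nat_add_iff' (f := fun n : ℕ => ((n ! : ℝ))⁻¹ • x ^ n) 1).2 hs
    simpa using this
  have hbound : ∀ n : ℕ, ‖(((n+1) ! : ℝ))⁻¹ • x ^ (n+1)‖ ≤ ‖x‖ * (‖x‖ ^ n / n !) := by
    intro n
    have h1' : ‖(((n+1) ! : ℝ))⁻¹ • x ^ (n+1)‖ ≤ (((n+1) ! : ℝ))⁻¹ * ‖x‖ ^ (n+1) := by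
      rw [norm_smul]
      gcongr
      · rw [Real.norm_eq_abs, abs_of_nonneg (by positivity)]
      · exact norm_pow_le' x (Nat.succ_pos n)
    refine h1'.trans ?_
    rw [pow_succ, div_eq_mul_inv]
    calc (((n+1) ! : ℝ))⁻¹ * (‖x‖ ^ n * ‖x‖) ≤ ((n ! : ℝ))⁻¹ * (‖x‖ ^ n * ‖x‖) := by
          have hf : ((n ! : ℝ)) ≤ (((n+1) ! : ℝ)) := by
            exact_mod_cast Nat.factorial_le (Nat.le_succ n)
          have h0 : (0:ℝ) < (n ! : ℝ) := by positivity
          gcongr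
      _ = ‖x‖ * (‖x‖ ^ n * ((n ! : ℝ))⁻¹) := by ring
  have hsum2 : Summable fun n : ℕ => ‖x‖ * (‖x‖ ^ n / n !) :=
    (Real.summable_pow_div_factorial ‖x‖).mul_left _
  have hsumn : Summable fun n : ℕ => ‖(((n+1) ! : ℝ))⁻¹ • x ^ (n+1)‖ :=
    Summable.of_nonneg_of_le (fun n => norm_nonneg _) hbound hsum2
  have key : ‖NormedSpace.exp x - 1‖ ≤ ∑' n : ℕ, ‖x‖ * (‖x‖ ^ n / n !) := by
    rw [← h1.tsum_eq]
    exact (norm_tsum_le_tsum_norm hsumn).trans (Summable.tsum_le_tsum hbound hsumn hsum2)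
  refine key.trans ?_
  rw [tsum_mul_left]
  have : ∑' n : ℕ, ‖x‖ ^ n / n ! = Real.exp ‖x‖ := by
    rw [Real.exp_eq_exp_ℝ, NormedSpace.exp_eq_tsum_div]
  rw [this]

lemma aux_mul_frac {q ε : ℝ} (hq : 0 ≤ q) (hε : 0 < ε) : q * (ε / (4*(q+1))) ≤ ε/4 := by
  rw [mul_div_assoc', div_le_div_iff₀ (by positivity) (by norm_num)]
  nlinarith

/-- A locally Lipschitz map admits a uniform local Lipschitz estimate near a compact set. -/
lemma aux_loclip_unif {α β : Type*} [PseudoMetricSpace α] [PseudoMetricSpace β]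
    {f : α → β} (hf : LocallyLipschitz f) {K : Set α} (hK : IsCompact K) :
    ∃ r > (0:ℝ), ∃ L : ℝ, 0 ≤ L ∧
      ∀ p ∈ K, ∀ q, dist p q < r → dist (f p) (f q) ≤ L * dist p q := by
  have H : ∀ x : α, ∃ (C : NNReal) (ε : ℝ), 0 < ε ∧ LipschitzOnWith C f (ball x ε) := by
    intro x
    obtain ⟨C, t, ht, hlip⟩ := hf x
    obtain ⟨ε, hε, hball⟩ := Metric.mem_nhds_iff.1 ht
    exact ⟨C, ε, hε, hlip.mono hball⟩
  choose C ε hε hlip using H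
  obtain ⟨s, hsK, hcov⟩ := hK.elim_nhds_subcover (fun x => ball x (ε x / 2))
    (fun x _ => ball_mem_nhds x (half_pos (hε x)))
  rcases s.eq_empty_or_nonempty with hs | hs
  · refine ⟨1, one_pos, 0, le_refl _, fun p hp q _ => absurd (hcov hp) ?_⟩
    simp [hs]
  · refine ⟨s.inf' hs (fun x => ε x / 2), ?_, s.sup' hs (fun x => (C x : ℝ)), ?_, ?_⟩
    · exact (Finset.lt_inf'_iff hs).2 fun x _ => half_pos (hε x)
    · obtain ⟨x, hx⟩ := hs
      exact le_trans (C x).coe_nonneg (Finset.le_sup' (fun x => (C x : ℝ)) hx)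
    · intro p hp q hpq
      obtain ⟨x, hx, hpx⟩ := Set.mem_iUnion₂.1 (hcov hp)
      have hxs : x ∈ s := by simpa using hx
      have hpx' : p ∈ ball x (ε x) :=
        mem_ball.2 (lt_of_lt_of_le (mem_ball.1 hpx) (by linarith [hε x]))
      have hqx : q ∈ ball x (ε x) := by
        have h1 : dist p q < ε x / 2 := lt_of_lt_of_le hpq (Finset.inf'_le _ hxs)
        have := mem_ball.1 hpx
        exact mem_ball.2 (lt_of_le_of_lt (dist_triangle q p x) (by
          rw [dist_comm q p]; linarith))
      calc dist (f p) (f q) ≤ (C x : ℝ) * dist p q := (hlip x).dist_le_mul p hpx' q hqx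
        _ ≤ _ := by
            have := Finset.le_sup' (fun x => (C x : ℝ)) hxs
            exact mul_le_mul_of_nonneg_right this dist_nonneg

section entry
attribute [local instance] Matrix.linftyOpNormedRing Matrix.linftyOpNormedAlgebra

lemma aux_entry_abs_le {m : ℕ} (A : Matrix (Fin m) (Fin m) ℝ) (k l : Fin m) :
    |A k l| ≤ ‖A‖ := by
  have h1 : ‖A k l‖₊ ≤ ‖A‖₊ := by
    rw [Matrix.linfty_opNNNorm_def]
    exact le_trans (Finset.single_le_sum (f := fun j => ‖A k j‖₊)
      (fun _ _ => by positivity) (Finset.mem_univ l))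
      (Finset.le_sup (f := fun i => ∑ j, ‖A i j‖₊) (Finset.mem_univ k))
  exact_mod_cast h1

lemma aux_exp_diag_entry_bound {m : ℕ} (B : Matrix (Fin m) (Fin m) ℝ) {h : ℝ}
    (h0 : 0 ≤ h) (h1 : h ≤ 1) (k : Fin m) :
    |NormedSpace.exp (-(h • B)) k k - 1| ≤ (‖B‖ * Real.exp ‖B‖) * h := by
  have hn : ‖-(h • B)‖ = h * ‖B‖ := by
    rw [norm_neg, norm_smul, Real.norm_eq_abs, abs_of_nonneg h0]
  have key := aux_norm_exp_sub_one_le (-(h • B))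
  rw [hn] at key
  have e1 : |NormedSpace.exp (-(h • B)) k k - 1| ≤ ‖NormedSpace.exp (-(h • B)) - 1‖ := by
    have := aux_entry_abs_le (NormedSpace.exp (-(h • B)) - 1) k k
    simpa [Matrix.sub_apply, Matrix.one_apply] using this
  refine e1.trans (key.trans ?_)
  have hB : (0:ℝ) ≤ ‖B‖ := norm_nonneg _
  have hexp : Real.exp (h * ‖B‖) ≤ Real.exp ‖B‖ :=
    Real.exp_le_exp.2 (by nlinarith)
  calc h * ‖B‖ * Real.exp (h * ‖B‖) ≤ h * ‖B‖ * Real.exp ‖B‖ := by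
        exact mul_le_mul_of_nonneg_left hexp (by positivity)
    _ = ‖B‖ * Real.exp ‖B‖ * h := by ring

lemma aux_jump_bound {m : ℕ} {Ω : Type*} [MeasurableSpace Ω] (B : Matrix (Fin m) (Fin m) ℝ)
    (P : Measure Ω) [IsProbabilityMeasure P]
    (X : ℝ → Ω → Fin m) (hX : ∀ t, Measurable (X t))
    (hmarkov : ∀ (s t : ℝ), 0 ≤ s → s ≤ t → ∀ k j : Fin m,
      (P {ω | X s ω = k ∧ X t ω = j}).toReal
        = (P {ω | X s ω = k}).toReal * NormedSpace.exp (-((t - s) • B)) k j) :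
    ∃ C : ℝ, 0 ≤ C ∧ ∀ s t : ℝ, 0 ≤ s → s ≤ t → t - s ≤ 1 →
      (P {ω | X s ω ≠ X t ω}).toReal ≤ C * (t - s) := by
  refine ⟨m * (‖B‖ * Real.exp ‖B‖), by positivity, fun s t hs hst h1 => ?_⟩
  set h := t - s with hh
  have h0 : 0 ≤ h := by simp [hh]; linarith
  set A : Fin m → Set Ω := fun k => {ω | X s ω = k} with hA
  set Bs : Fin m → Set Ω := fun k => {ω | X s ω = k ∧ X t ω = k} with hBs
  have hAmeas : ∀ k, MeasurableSet (A k) := fun k => (hX s) (measurableSet_singleton k)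
  have hBmeas : ∀ k, MeasurableSet (Bs k) := by
    intro k
    have : Bs k = A k ∩ {ω | X t ω = k} := by
      ext ω; simp [hBs, hA, Set.mem_setOf_eq, Set.mem_inter_iff]
    rw [this]
    exact (hAmeas k).inter ((hX t) (measurableSet_singleton k))
  have hsub : ∀ k, Bs k ⊆ A k := fun k ω hω => hω.1
  have hcover : {ω | X s ω ≠ X t ω} ⊆ ⋃ k, (A k \ Bs k) := by
    intro ω hω
    exact Set.mem_iUnion.2 ⟨X s ω, ⟨rfl, fun hc => hω (hc.1.trans hc.2.symm)⟩⟩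
  have step1 : (P {ω | X s ω ≠ X t ω}).toReal ≤ ∑ k, (P (A k \ Bs k)).toReal := by
    have e1 : P {ω | X s ω ≠ X t ω} ≤ ∑ k, P (A k \ Bs k) :=
      le_trans (measure_mono hcover) (le_trans (measure_iUnion_le _) (by rw [tsum_fintype]))
    have e2 : (∑ k, P (A k \ Bs k)) ≠ ⊤ :=
      ENNReal.sum_ne_top.2 (fun k _ => measure_ne_top _ _)
    calc (P {ω | X s ω ≠ X t ω}).toReal ≤ (∑ k, P (A k \ Bs k)).toReal :=
          ENNReal.toReal_mono e2 e1
      _ = ∑ k, (P (A k \ Bs k)).toReal := by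
          rw [ENNReal.toReal_sum (fun k _ => measure_ne_top _ _)]
  have step2 : ∀ k, (P (A k \ Bs k)).toReal ≤ (‖B‖ * Real.exp ‖B‖) * h := by
    intro k
    have hdiff : P (A k \ Bs k) = P (A k) - P (Bs k) :=
      measure_diff (hsub k) (hBmeas k).nullMeasurableSet (measure_ne_top _ _)
    have htr : (P (A k \ Bs k)).toReal = (P (A k)).toReal - (P (Bs k)).toReal := by
      rw [hdiff, ENNReal.toReal_sub_of_le (measure_mono (hsub k)) (measure_ne_top _ _)]
    have hmk := hmarkov s t hs hst k k
    have heq : (P (A k \ Bs k)).toReal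
        = (P (A k)).toReal * (1 - NormedSpace.exp (-(h • B)) k k) := by
      rw [htr, hA, hh]
      rw [show P (Bs k) = P {ω | X s ω = k ∧ X t ω = k} from rfl, hmk]
      ring_nf
    rw [heq]
    have hPA : (P (A k)).toReal ≤ 1 := by
      simpa using ENNReal.toReal_mono (by simp) (prob_le_one (μ := P) (s := A k))
    have hPA0 : 0 ≤ (P (A k)).toReal := ENNReal.toReal_nonneg
    have hent := aux_exp_diag_entry_bound B h0 h1 k
    calc (P (A k)).toReal * (1 - NormedSpace.exp (-(h • B)) k k)
        ≤ (P (A k)).toReal * |1 - NormedSpace.exp (-(h • B)) k k| :=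
          mul_le_mul_of_nonneg_left (le_abs_self _) hPA0
      _ ≤ 1 * ((‖B‖ * Real.exp ‖B‖) * h) := by
          apply mul_le_mul hPA ?_ (abs_nonneg _) zero_le_one
          rw [abs_sub_comm]; exact hent
      _ = (‖B‖ * Real.exp ‖B‖) * h := one_mul _
  calc (P {ω | X s ω ≠ X t ω}).toReal ≤ ∑ k, (P (A k \ Bs k)).toReal := step1
    _ ≤ ∑ _k : Fin m, (‖B‖ * Real.exp ‖B‖) * h := Finset.sum_le_sum fun k _ => step2 k
    _ = m * (‖B‖ * Real.exp ‖B‖) * h := by simp [mul_assoc, Finset.sum_const]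
end entry

end Helpers

/-- if `u : ℝ₊ × ℝ^N → ℝ^m` is locally Lipschitz and `γ` is an admissible
random curve for the Markov chain `X` with generator `−B` (law `P i` started at `i`),
then `t ↦ E_i[u_{ω(t)}(t, γ(t,ω))]` is locally absolutely continuous on `ℝ₊`. -/
theorem stmt10 {N m : ℕ} {Ω : Type*} [m0 : MeasurableSpace Ω]
    (B : Matrix (Fin m) (Fin m) ℝ)
    (hoff : ∀ i j, i ≠ j → B i j ≤ 0)
    (hrow : ∀ i, ∑ j, B i j = 0)
    (P : Fin m → Measure Ω) (hP : ∀ i, IsProbabilityMeasure (P i))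
    (X : ℝ → Ω → Fin m) (hX : ∀ t, Measurable (X t))
    (hstart : ∀ i, P i {ω | X 0 ω = i} = 1)
    (hmarkov : ∀ (i : Fin m) (s t : ℝ), 0 ≤ s → s ≤ t → ∀ k j : Fin m,
      (P i {ω | X s ω = k ∧ X t ω = j}).toReal
        = (P i {ω | X s ω = k}).toReal * NormedSpace.exp (-((t - s) • B)) k j)
    (u : ℝ → EuclideanSpace ℝ (Fin N) → Fin m → ℝ)
    (hu : LocallyLipschitz (fun p : ℝ × EuclideanSpace ℝ (Fin N) => u p.1 p.2))
    (γ : ℝ → Ω → EuclideanSpace ℝ (Fin N))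
    (hAC : UnifLocAbsCont γ)
    (hNA : NonAnticipating X γ)
    (hmeas : Measurable fun p : ℝ × Ω => γ p.1 p.2) :
    ∀ i : Fin m,
      LocallyAbsContOn (fun t => ∫ ω, u t (γ t ω) (X t ω) ∂(P i)) (Set.Ici (0 : ℝ)) := by
  intro i
  haveI := hP i
  intro a b ha hb ε hε
  have ha0 : (0:ℝ) ≤ a := ha
  have hb0 : (0:ℝ) ≤ b := hb
  set T : ℝ := max a b with hT
  have hT0 : 0 ≤ T := le_trans ha0 (le_max_left _ _)
  -- (1) uniform bound on γ on [0,T]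
  have hMbound : ∃ M : ℝ, 0 ≤ M ∧ ∀ ω, ∀ t ∈ Set.Icc (0:ℝ) T, ‖γ t ω‖ ≤ M := by
    -- the starting point depends only on the initial state
    have hγ0 : ∀ ω₁ ω₂ : Ω, X 0 ω₁ = X 0 ω₂ → γ 0 ω₁ = γ 0 ω₂ := by
      intro ω₁ ω₂ h
      refine hNA 0 le_rfl ω₁ ω₂ (fun r hr hr' => ?_) 0 le_rfl le_rfl
      have : r = 0 := le_antisymm hr' hr
      rw [this]; exact h
    classical
    set g : Fin m → EuclideanSpace ℝ (Fin N) := fun k =>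
      if h : ∃ ω, X 0 ω = k then γ 0 h.choose else 0 with hg
    have hγ0g : ∀ ω, γ 0 ω = g (X 0 ω) := by
      intro ω
      have hex : ∃ ω', X 0 ω' = X 0 ω := ⟨ω, rfl⟩
      rw [hg]
      simp only
      rw [dif_pos hex]
      exact hγ0 ω hex.choose hex.choose_spec.symm
    set M₀ : ℝ := ∑ k, ‖g k‖ with hM₀def
    have hM₀ : ∀ ω, ‖γ 0 ω‖ ≤ M₀ := by
      intro ω
      rw [hγ0g]
      exact Finset.single_le_sum (f := fun k => ‖g k‖) (fun k _ => norm_nonneg _)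
        (Finset.mem_univ _)
    have hM₀0 : 0 ≤ M₀ := Finset.sum_nonneg fun k _ => norm_nonneg _
    -- a uniform step estimate from `hAC`
    obtain ⟨δ₀, hδ₀pos, hδ₀⟩ := hAC (T+1) (by linarith) 1 one_pos
    have hstep : ∀ ω, ∀ s t' : ℝ, 0 ≤ s → s ≤ t' → t' ≤ T → t' - s < δ₀ →
        ‖γ t' ω - γ s ω‖ ≤ 1 := by
      intro ω s t' hs hst htT hlen
      have h1 := hδ₀ ω 1 ![s] ![t'] ?_ ?_ ?_
      · simpa using h1.le
      · intro j
        fin_cases j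
        refine ⟨by simpa using hs, by simpa using hst, by simp; linarith⟩
      · intro j l hjl
        exact absurd (Subsingleton.elim j l) hjl
      · simpa using hlen
    -- iterate the step estimate
    have hiter : ∀ ω, ∀ n : ℕ, ∀ t' : ℝ, 0 ≤ t' → t' ≤ T → t' ≤ n * (δ₀/2) →
        ‖γ t' ω - γ 0 ω‖ ≤ n := by
      intro ω n
      induction n with
      | zero =>
          intro t' ht0 htT hle
          have : t' = 0 := le_antisymm (by simpa using hle) ht0
          simp [this]
      | succ n ih =>
          intro t' ht0 htT hle
          rcases le_or_gt t' (n * (δ₀/2)) with hcase | hcase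
          · exact le_trans (ih t' ht0 htT hcase) (by exact_mod_cast Nat.cast_le.2 (Nat.le_succ n))
          · set s : ℝ := n * (δ₀/2) with hsdef
            have hs0 : 0 ≤ s := by positivity
            have hst : s ≤ t' := hcase.le
            have hsT : s ≤ T := le_trans hst htT
            have hlen : t' - s < δ₀ := by
              have : t' ≤ s + δ₀/2 := by
                rw [hsdef]
                push_cast at hle ⊢
                nlinarith
              linarith
            have h1 := hstep ω s t' hs0 hst htT hlen
            have h2 := ih s hs0 hsT le_rfl
            calc ‖γ t' ω - γ 0 ω‖ ≤ ‖γ t' ω - γ s ω‖ + ‖γ s ω - γ 0 ω‖ := by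
                  simpa using norm_sub_le_norm_sub_add_norm_sub (γ t' ω) (γ s ω) (γ 0 ω)
              _ ≤ 1 + n := add_le_add h1 h2
              _ = ((n+1 : ℕ) : ℝ) := by push_cast; ring
    set n₀ : ℕ := ⌈T / (δ₀/2)⌉₊ with hn₀
    refine ⟨M₀ + n₀, by positivity, ?_⟩
    intro ω t ht
    have hTn : T ≤ n₀ * (δ₀/2) := by
      have := Nat.le_ceil (T / (δ₀/2))
      rw [div_le_iff₀ (by positivity : (0:ℝ) < δ₀/2)] at this
      simpa [hn₀] using this
    have h1 := hiter ω n₀ t ht.1 ht.2 (le_trans ht.2 hTn)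
    calc ‖γ t ω‖ ≤ ‖γ t ω - γ 0 ω‖ + ‖γ 0 ω‖ := by
          simpa using norm_add_le (γ t ω - γ 0 ω) (γ 0 ω)
      _ ≤ n₀ + M₀ := add_le_add h1 (hM₀ ω)
      _ = M₀ + n₀ := by ring
  obtain ⟨M, hM0, hMb⟩ := hMbound
  -- (2) compact set and Lipschitz estimate
  set K : Set (ℝ × EuclideanSpace ℝ (Fin N)) :=
    Set.Icc (0:ℝ) T ×ˢ Metric.closedBall (0 : EuclideanSpace ℝ (Fin N)) M with hK
  have hKcomp : IsCompact K := isCompact_Icc.prod (isCompact_closedBall _ _)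
  obtain ⟨r, hr, L, hL, hLip⟩ := aux_loclip_unif hu hKcomp
  -- (3) bound of u on K
  obtain ⟨Mu₀, hMu₀⟩ := hKcomp.exists_bound_of_continuousOn hu.continuous.continuousOn
  set Mu : ℝ := max Mu₀ 0 with hMu
  have hMu0 : 0 ≤ Mu := le_max_right _ _
  have hub : ∀ s ∈ Set.Icc (0:ℝ) T, ∀ ω, ∀ k, |u s (γ s ω) k| ≤ Mu := by
    intro s hs ω k
    have hpt : (s, γ s ω) ∈ K := ⟨hs, Metric.mem_closedBall.2 (by
      simpa using hMb ω s hs)⟩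
    calc |u s (γ s ω) k| ≤ ‖(fun p : ℝ × EuclideanSpace ℝ (Fin N) => u p.1 p.2) (s, γ s ω)‖ := by
          simpa [Real.norm_eq_abs] using
            norm_le_pi_norm (fun k => u s (γ s ω) k) k
      _ ≤ Mu₀ := hMu₀ _ hpt
      _ ≤ Mu := le_max_left _ _
  -- (4) jump bound
  obtain ⟨C, hC0, hjump⟩ := aux_jump_bound B (P i) X hX (hmarkov i)
  -- (5) measurability & integrability
  have hγm : ∀ s : ℝ, Measurable (fun ω => γ s ω) :=
    fun s => hmeas.comp (measurable_const.prodMk measurable_id)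
  have hucont : Continuous (fun p : ℝ × EuclideanSpace ℝ (Fin N) => u p.1 p.2) := hu.continuous
  have hum : ∀ (s : ℝ) (k : Fin m), Measurable (fun ω => u s (γ s ω) k) := by
    intro s k
    exact ((continuous_apply k).comp hucont).measurable.comp
      (measurable_const.prodMk (hγm s))
  have hkey : ∀ s t' : ℝ, (fun ω => u s (γ s ω) (X t' ω))
      = fun ω => ∑ k, Set.indicator {ω' | X t' ω' = k} (fun ω' => u s (γ s ω') k) ω := by
    intro s t'
    funext ω
    rw [Finset.sum_eq_single (X t' ω)]
    · rw [Set.indicator_of_mem (by simp : ω ∈ {ω' | X t' ω' = X t' ω})]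
    · intro k _ hk
      refine Set.indicator_of_notMem (fun hmem => hk ?_) _
      have : X t' ω = k := hmem
      exact this.symm
    · intro hmem; exact absurd (Finset.mem_univ _) hmem
  have hintm : ∀ s t' : ℝ, Measurable (fun ω => u s (γ s ω) (X t' ω)) := by
    intro s t'
    rw [hkey s t']
    exact Finset.measurable_sum _ fun k _ =>
      (hum s k).indicator ((hX t') (measurableSet_singleton k))
  have hint : ∀ s ∈ Set.Icc (0:ℝ) T, ∀ t' : ℝ,
      Integrable (fun ω => u s (γ s ω) (X t' ω)) (P i) := by
    intro s hs t'
    refine Integrable.mono' (integrable_const Mu) (hintm s t').aestronglyMeasurable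
      (Filter.Eventually.of_forall fun ω => ?_)
    simpa [Real.norm_eq_abs] using hub s hs ω (X t' ω)
  -- (6) choose δ
  have hL1 : (0:ℝ) < L + 1 := by linarith
  set ε₁ : ℝ := ε / (4*(L+1)) with hε₁def
  have hε₁pos : 0 < ε₁ := by positivity
  obtain ⟨δ₁, hδ₁pos, hδ₁⟩ := hAC (T+1) (by linarith) ε₁ hε₁pos
  obtain ⟨δ₂, hδ₂pos, hδ₂⟩ := hAC (T+1) (by linarith) r hr
  set ε₂ : ℝ := ε / (4*(2*Mu*C+1)) with hε₂def
  have hε₂pos : 0 < ε₂ := by positivity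
  set δv : ℝ := min (min δ₁ δ₂) (min 1 (min r (min ε₁ ε₂))) with hδv
  have hδvpos : 0 < δv := by
    refine lt_min (lt_min hδ₁pos hδ₂pos) (lt_min one_pos (lt_min hr (lt_min hε₁pos hε₂pos)))
  refine ⟨δv, hδvpos, ?_⟩
  intro n c d hcd hdisj hsum
  have hδv1 : δv ≤ δ₁ := le_trans (min_le_left _ _) (min_le_left _ _)
  have hδv2 : δv ≤ δ₂ := le_trans (min_le_left _ _) (min_le_right _ _)
  have hδvone : δv ≤ 1 := le_trans (min_le_right _ _) (min_le_left _ _)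
  have hδvr : δv ≤ r := le_trans (min_le_right _ _)
    (le_trans (min_le_right _ _) (min_le_left _ _))
  have hδvε₁ : δv ≤ ε₁ := le_trans (min_le_right _ _)
    (le_trans (min_le_right _ _) (le_trans (min_le_right _ _) (min_le_left _ _)))
  have hδvε₂ : δv ≤ ε₂ := le_trans (min_le_right _ _)
    (le_trans (min_le_right _ _) (le_trans (min_le_right _ _) (min_le_right _ _)))
  -- per-interval facts
  have hc0 : ∀ j, 0 ≤ c j := fun j => le_trans ha0 (hcd j).1.1
  have hcdj : ∀ j, c j ≤ d j := fun j => (hcd j).2.2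
  have hdT : ∀ j, d j ≤ T := fun j => le_trans (hcd j).2.1.2 (le_max_right a b)
  have hcT : ∀ j, c j ≤ T := fun j => le_trans (hcdj j) (hdT j)
  have hcIcc : ∀ j, c j ∈ Set.Icc (0:ℝ) T := fun j => ⟨hc0 j, hcT j⟩
  have hdIcc : ∀ j, d j ∈ Set.Icc (0:ℝ) T := fun j => ⟨le_trans (hc0 j) (hcdj j), hdT j⟩
  have hlenj : ∀ j, d j - c j < δv := by
    intro j
    refine lt_of_le_of_lt ?_ hsum
    exact Finset.single_le_sum (f := fun l => d l - c l)
      (fun l _ => sub_nonneg.2 (hcdj l)) (Finset.mem_univ j)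
  have hgap : ∀ j ω, ‖γ (d j) ω - γ (c j) ω‖ < r := by
    intro j ω
    have h1 := hδ₂ ω 1 ![c j] ![d j] ?_ ?_ ?_
    · simpa using h1
    · intro l
      fin_cases l
      exact ⟨by simpa using hc0 j, by simpa using hcdj j,
        by simp; linarith [hdT j]⟩
    · intro l l' hll'
      exact absurd (Subsingleton.elim l l') hll'
    · simp
      linarith [hlenj j, hδv2]
  -- integrability of the γ-increments
  have hγint : ∀ j, Integrable (fun ω => ‖γ (d j) ω - γ (c j) ω‖) (P i) := by
    intro j
    refine Integrable.mono' (integrable_const (2*M))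
      (((hγm (d j)).sub (hγm (c j))).norm.aestronglyMeasurable)
      (Filter.Eventually.of_forall fun ω => ?_)
    have h1 := hMb ω (d j) (hdIcc j)
    have h2 := hMb ω (c j) (hcIcc j)
    calc ‖‖γ (d j) ω - γ (c j) ω‖‖ = ‖γ (d j) ω - γ (c j) ω‖ := norm_norm _
      _ ≤ ‖γ (d j) ω‖ + ‖γ (c j) ω‖ := norm_sub_le _ _
      _ ≤ 2*M := by linarith
  set G : Fin n → ℝ := fun j => ∫ ω, ‖γ (d j) ω - γ (c j) ω‖ ∂(P i) with hGdef
  have hGsum : ∑ j, G j ≤ ε₁ := by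
    rw [hGdef]
    simp only
    rw [← integral_finset_sum _ (fun j _ => hγint j)]
    have hpt : ∀ ω, ∑ j, ‖γ (d j) ω - γ (c j) ω‖ ≤ ε₁ := by
      intro ω
      refine (hδ₁ ω n c d ?_ hdisj (lt_of_lt_of_le hsum hδv1)).le
      intro j
      exact ⟨hc0 j, hcdj j, by linarith [hdT j]⟩
    calc ∫ ω, ∑ j, ‖γ (d j) ω - γ (c j) ω‖ ∂(P i) ≤ ∫ _ω, ε₁ ∂(P i) :=
          integral_mono (integrable_finset_sum _ (fun j _ => hγint j))
            (integrable_const _) hpt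
      _ = ε₁ := by simp
  -- the two per-interval estimates
  have hterm : ∀ j, ‖(∫ ω, u (d j) (γ (d j) ω) (X (d j) ω) ∂(P i))
      - (∫ ω, u (c j) (γ (c j) ω) (X (c j) ω) ∂(P i))‖
      ≤ L * (d j - c j) + L * G j + 2*Mu*(C*(d j - c j)) := by
    intro j
    have hsI : c j ∈ Set.Icc (0:ℝ) T := hcIcc j
    have htI : d j ∈ Set.Icc (0:ℝ) T := hdIcc j
    have hint_dd := hint (d j) htI (d j)
    have hint_cd := hint (c j) hsI (d j)
    have hint_cc := hint (c j) hsI (c j)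
    have hsplit : (∫ ω, u (d j) (γ (d j) ω) (X (d j) ω) ∂(P i))
        - (∫ ω, u (c j) (γ (c j) ω) (X (c j) ω) ∂(P i))
        = (∫ ω, (u (d j) (γ (d j) ω) (X (d j) ω) - u (c j) (γ (c j) ω) (X (d j) ω)) ∂(P i))
        + (∫ ω, (u (c j) (γ (c j) ω) (X (d j) ω) - u (c j) (γ (c j) ω) (X (c j) ω)) ∂(P i)) := by
      rw [integral_sub hint_dd hint_cd, integral_sub hint_cd hint_cc]
      ring
    rw [hsplit]
    refine le_trans (norm_add_le _ _) ?_
    -- first term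
    have hT1 : ‖∫ ω, (u (d j) (γ (d j) ω) (X (d j) ω) - u (c j) (γ (c j) ω) (X (d j) ω)) ∂(P i)‖
        ≤ L * (d j - c j) + L * G j := by
      refine le_trans (norm_integral_le_integral_norm _) ?_
      have hptw : ∀ ω, ‖u (d j) (γ (d j) ω) (X (d j) ω) - u (c j) (γ (c j) ω) (X (d j) ω)‖
          ≤ L * (d j - c j) + L * ‖γ (d j) ω - γ (c j) ω‖ := by
        intro ω
        have hd1 : dist (c j) (d j) = d j - c j := by
          rw [Real.dist_eq, abs_sub_comm, abs_of_nonneg (sub_nonneg.2 (hcdj j))]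
        have hd2 : dist (γ (c j) ω) (γ (d j) ω) = ‖γ (d j) ω - γ (c j) ω‖ := by
          rw [dist_eq_norm, norm_sub_rev]
        have hdistpq : dist ((c j, γ (c j) ω) : ℝ × EuclideanSpace ℝ (Fin N)) (d j, γ (d j) ω)
            = max (d j - c j) ‖γ (d j) ω - γ (c j) ω‖ := by
          rw [Prod.dist_eq]
          simp only []
          rw [hd1, hd2]
        have hpK : ((c j, γ (c j) ω) : ℝ × EuclideanSpace ℝ (Fin N)) ∈ K :=
          ⟨hsI, Metric.mem_closedBall.2 (by simpa using hMb ω (c j) hsI)⟩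
        have hdlt : dist ((c j, γ (c j) ω) : ℝ × EuclideanSpace ℝ (Fin N)) (d j, γ (d j) ω) < r := by
          rw [hdistpq]
          exact max_lt (lt_of_lt_of_le (hlenj j) hδvr) (hgap j ω)
        have hLip' := hLip _ hpK _ hdlt
        have hcomp : ‖u (d j) (γ (d j) ω) (X (d j) ω) - u (c j) (γ (c j) ω) (X (d j) ω)‖
            ≤ dist (u (c j) (γ (c j) ω)) (u (d j) (γ (d j) ω)) := by
          have h0 : dist (u (d j) (γ (d j) ω) (X (d j) ω)) (u (c j) (γ (c j) ω) (X (d j) ω))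
              ≤ dist (u (d j) (γ (d j) ω)) (u (c j) (γ (c j) ω)) :=
            dist_le_pi_dist _ _ _
          rw [dist_comm (u (c j) (γ (c j) ω))]
          simpa [Real.dist_eq, Real.norm_eq_abs] using h0
        refine hcomp.trans (le_trans hLip' ?_)
        rw [hdistpq]
        have hmax : max (d j - c j) ‖γ (d j) ω - γ (c j) ω‖
            ≤ (d j - c j) + ‖γ (d j) ω - γ (c j) ω‖ :=
          max_le (le_add_of_nonneg_right (norm_nonneg _))
            (le_add_of_nonneg_left (sub_nonneg.2 (hcdj j)))
        calc L * max (d j - c j) ‖γ (d j) ω - γ (c j) ω‖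
            ≤ L * ((d j - c j) + ‖γ (d j) ω - γ (c j) ω‖) :=
              mul_le_mul_of_nonneg_left hmax hL
          _ = L * (d j - c j) + L * ‖γ (d j) ω - γ (c j) ω‖ := by ring
      calc ∫ ω, ‖u (d j) (γ (d j) ω) (X (d j) ω) - u (c j) (γ (c j) ω) (X (d j) ω)‖ ∂(P i)
          ≤ ∫ ω, (L * (d j - c j) + L * ‖γ (d j) ω - γ (c j) ω‖) ∂(P i) :=
            integral_mono ((hint_dd.sub hint_cd).norm)
              ((integrable_const _).add ((hγint j).const_mul L)) hptw
        _ = L * (d j - c j) + L * G j := by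
            rw [integral_add (integrable_const _) ((hγint j).const_mul L),
              integral_const, integral_const_mul]
            simp [hGdef]
    -- second term
    have hT2 : ‖∫ ω, (u (c j) (γ (c j) ω) (X (d j) ω) - u (c j) (γ (c j) ω) (X (c j) ω)) ∂(P i)‖
        ≤ 2*Mu*(C*(d j - c j)) := by
      have hSm : MeasurableSet {ω | X (c j) ω ≠ X (d j) ω} := by
        have heq : {ω | X (c j) ω = X (d j) ω}
            = ⋃ k, ({ω | X (c j) ω = k} ∩ {ω | X (d j) ω = k}) := by
          ext ω
          simp only [Set.mem_setOf_eq, Set.mem_iUnion, Set.mem_inter_iff]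
          constructor
          · intro h; exact ⟨X (d j) ω, h, rfl⟩
          · rintro ⟨k, h1, h2⟩; rw [h1, h2]
        have hmeq : MeasurableSet {ω | X (c j) ω = X (d j) ω} := by
          rw [heq]
          exact MeasurableSet.iUnion fun k =>
            ((hX (c j)) (measurableSet_singleton k)).inter
              ((hX (d j)) (measurableSet_singleton k))
        have : {ω | X (c j) ω ≠ X (d j) ω} = {ω | X (c j) ω = X (d j) ω}ᶜ := rfl
        rw [this]
        exact hmeq.compl
      have hptw : ∀ ω, ‖u (c j) (γ (c j) ω) (X (d j) ω) - u (c j) (γ (c j) ω) (X (c j) ω)‖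
          ≤ Set.indicator {ω' | X (c j) ω' ≠ X (d j) ω'} (fun _ => 2*Mu) ω := by
        intro ω
        by_cases hω : X (c j) ω = X (d j) ω
        · have hz : u (c j) (γ (c j) ω) (X (d j) ω) - u (c j) (γ (c j) ω) (X (c j) ω) = 0 := by
            rw [hω]; ring
          rw [hz, norm_zero]
          exact Set.indicator_nonneg (fun _ _ => by positivity) ω
        · rw [Set.indicator_of_mem (show ω ∈ {ω' | X (c j) ω' ≠ X (d j) ω'} from hω)]
          have h1 := hub (c j) hsI ω (X (d j) ω)
          have h2 := hub (c j) hsI ω (X (c j) ω)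
          rw [Real.norm_eq_abs]
          have h3 := abs_sub (u (c j) (γ (c j) ω) (X (d j) ω))
            (u (c j) (γ (c j) ω) (X (c j) ω))
          linarith
      refine le_trans (norm_integral_le_integral_norm _) ?_
      have hInt2 : Integrable (Set.indicator {ω' | X (c j) ω' ≠ X (d j) ω'}
          (fun _ => 2*Mu)) (P i) := (integrable_const (2*Mu)).indicator hSm
      calc ∫ ω, ‖u (c j) (γ (c j) ω) (X (d j) ω) - u (c j) (γ (c j) ω) (X (c j) ω)‖ ∂(P i)
          ≤ ∫ ω, Set.indicator {ω' | X (c j) ω' ≠ X (d j) ω'} (fun _ => 2*Mu) ω ∂(P i) :=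
            integral_mono ((hint_cd.sub hint_cc).norm) hInt2 hptw
        _ = ((P i) {ω' | X (c j) ω' ≠ X (d j) ω'}).toReal * (2*Mu) := by
            rw [integral_indicator_const _ hSm, smul_eq_mul, measureReal_def]
        _ ≤ (C*(d j - c j)) * (2*Mu) := by
            refine mul_le_mul_of_nonneg_right ?_ (by positivity)
            exact hjump (c j) (d j) (hc0 j) (hcdj j) (by linarith [hlenj j, hδvone])
        _ = 2*Mu*(C*(d j - c j)) := by ring
    linarith
  -- assemble
  have hS1 : ∑ j, (d j - c j) < δv := hsum
  have hS1' : 0 ≤ ∑ j, (d j - c j) := Finset.sum_nonneg fun j _ => sub_nonneg.2 (hcdj j)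
  calc ∑ j, ‖(∫ ω, u (d j) (γ (d j) ω) (X (d j) ω) ∂(P i))
        - (∫ ω, u (c j) (γ (c j) ω) (X (c j) ω) ∂(P i))‖
      ≤ ∑ j, (L * (d j - c j) + L * G j + 2*Mu*(C*(d j - c j))) :=
        Finset.sum_le_sum fun j _ => hterm j
    _ = L * (∑ j, (d j - c j)) + L * (∑ j, G j) + 2*Mu*C*(∑ j, (d j - c j)) := by
        simp only [Finset.sum_add_distrib, ← Finset.mul_sum]
        ring
    _ ≤ L * δv + L * ε₁ + 2*Mu*C*δv := by
        have hG0 : ∑ j, G j ≤ ε₁ := hGsum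
        have h2 : 0 ≤ 2*Mu*C := by positivity
        have := mul_le_mul_of_nonneg_left hS1.le hL
        have := mul_le_mul_of_nonneg_left hGsum hL
        have := mul_le_mul_of_nonneg_left hS1.le h2
        linarith
    _ < ε := by
        have h1 : L * δv ≤ L * ε₁ := mul_le_mul_of_nonneg_left hδvε₁ hL
        have h2 : L * ε₁ ≤ ε/4 := by
          rw [hε₁def]; exact aux_mul_frac hL hε
        have h3 : 2*Mu*C*δv ≤ ε/4 := by
          have : 2*Mu*C*δv ≤ 2*Mu*C*ε₂ := mul_le_mul_of_nonneg_left hδvε₂ (by positivity)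
          refine le_trans this ?_
          rw [hε₂def]; exact aux_mul_frac (by positivity) hε
        linarith
end
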